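/- arXiv:0801.2582 — 2 statements merged into one kernel-verified Lean document; each statement's English description precedes it below -/
import Mathlib

section
/- Let K be a simplicial complex with vertex set {1,…,n} and let f : {1,…,n} → ℝ³ be a map such that every four of the points f(1),…,f(n) are affinely independent, and such that for every triangle F ∈ K and every edge G ∈ K with F ∩ G = ∅ the convex hulls of f(F) and f(G) are disjoint. Define χ(a,b,c,d) to be the sign of the determinant of the 3×3 matrix with columns f(b)−f(a), f(c)−f(a), f(d)−f(a), for pairwise distinct a,b,c,d ∈ {1,…,n}. Then χ is a uniform rank-4 chirotope on {1,…,n} that is acyclic and admissible for K. -/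
set_option maxHeartbeats 1600000


open Finset

/-- The sign `sᵢ = (-1)^i · χ(c₁,…,ĉᵢ,…,c₅)` of the `i`-th element of a circuit
supported on the 5-set enumerated in increasing order by `c`. -/
def circSign (χ : ℕ → ℕ → ℕ → ℕ → ℤ) (c : Fin 5 → ℕ) (i : Fin 5) : ℤ :=
  (-1 : ℤ) ^ ((i : ℕ) + 1) *
    χ (c (i.succAbove 0)) (c (i.succAbove 1)) (c (i.succAbove 2)) (c (i.succAbove 3))

/-- A uniform rank-4 chirotope on the ground set `E`: values ±1 on tuples of pairwise
distinct elements, alternating (interchanging two arguments negates the value), and the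
three-term Grassmann–Plücker relations. -/
def IsChirotope (E : Finset ℕ) (χ : ℕ → ℕ → ℕ → ℕ → ℤ) : Prop :=
  (∀ a ∈ E, ∀ b ∈ E, ∀ c ∈ E, ∀ d ∈ E,
      a ≠ b → a ≠ c → a ≠ d → b ≠ c → b ≠ d → c ≠ d →
      χ a b c d = 1 ∨ χ a b c d = -1) ∧
  (∀ a ∈ E, ∀ b ∈ E, ∀ c ∈ E, ∀ d ∈ E, χ b a c d = -χ a b c d) ∧
  (∀ a ∈ E, ∀ b ∈ E, ∀ c ∈ E, ∀ d ∈ E, χ a c b d = -χ a b c d) ∧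
  (∀ a ∈ E, ∀ b ∈ E, ∀ c ∈ E, ∀ d ∈ E, χ a b d c = -χ a b c d) ∧
  (∀ y₁ ∈ E, ∀ y₂ ∈ E, ∀ x₁ ∈ E, ∀ x₂ ∈ E, ∀ x₃ ∈ E, ∀ x₄ ∈ E,
      y₁ ≠ y₂ →
      x₁ ≠ x₂ → x₁ ≠ x₃ → x₁ ≠ x₄ → x₂ ≠ x₃ → x₂ ≠ x₄ → x₃ ≠ x₄ →
      x₁ ≠ y₁ → x₁ ≠ y₂ → x₂ ≠ y₁ → x₂ ≠ y₂ → x₃ ≠ y₁ → x₃ ≠ y₂ →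
      x₄ ≠ y₁ → x₄ ≠ y₂ →
      ({1, -1} : Set ℤ) ⊆
        ({χ y₁ y₂ x₁ x₂ * χ y₁ y₂ x₃ x₄, -(χ y₁ y₂ x₁ x₃ * χ y₁ y₂ x₂ x₄),
          χ y₁ y₂ x₁ x₄ * χ y₁ y₂ x₂ x₃} : Set ℤ))

/-- Acyclic: for every 5-element subset of `E` the circuit signs are not all equal. -/
def IsAcyclic (E : Finset ℕ) (χ : ℕ → ℕ → ℕ → ℕ → ℤ) : Prop :=
  ∀ c : Fin 5 → ℕ, StrictMono c → (∀ i, c i ∈ E) →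
    ¬ (∀ i j : Fin 5, circSign χ c i = circSign χ c j)

/-- Admissible for a simplicial complex `K` (given as the set of all its faces): for
every triangle `F ∈ K` and every edge `G ∈ K` with `F ∩ G = ∅`, no circuit on `F ∪ G`
is positive exactly on `F` and negative exactly on `G` (or vice versa). -/
def IsAdmissibleSC (K : Finset (Finset ℕ)) (χ : ℕ → ℕ → ℕ → ℕ → ℤ) : Prop :=
  ∀ F ∈ K, F.card = 3 → ∀ G ∈ K, G.card = 2 → F ∩ G = ∅ →
    ∀ c : Fin 5 → ℕ, StrictMono c → Finset.image c Finset.univ = F ∪ G →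
      ¬ ∃ ε : ℤ, (ε = 1 ∨ ε = -1) ∧
          (∀ i : Fin 5, c i ∈ F → circSign χ c i = ε) ∧
          (∀ i : Fin 5, c i ∈ G → circSign χ c i = -ε)

/-- The sign of the determinant of the 3×3 matrix with columns
`f b - f a`, `f c - f a`, `f d - f a`. -/
noncomputable def detChi (f : ℕ → EuclideanSpace ℝ (Fin 3)) (a b c d : ℕ) : ℤ :=
  (SignType.sign (Matrix.det (Matrix.of fun i j : Fin 3 =>
    (![f b - f a, f c - f a, f d - f a] j) i)) : ℤ)


noncomputable def detR (f : ℕ → EuclideanSpace ℝ (Fin 3)) (a b c d : ℕ) : ℝ :=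
  Matrix.det (Matrix.of fun i j : Fin 3 =>
    (![f b - f a, f c - f a, f d - f a] j) i)

lemma detR_eq (f : ℕ → EuclideanSpace ℝ (Fin 3)) (a b c d : ℕ) :
    detR f a b c d =
      (f b 0 - f a 0) * ((f c 1 - f a 1) * (f d 2 - f a 2) - (f c 2 - f a 2) * (f d 1 - f a 1))
      - (f c 0 - f a 0) * ((f b 1 - f a 1) * (f d 2 - f a 2) - (f b 2 - f a 2) * (f d 1 - f a 1))
      + (f d 0 - f a 0) * ((f b 1 - f a 1) * (f c 2 - f a 2) - (f b 2 - f a 2) * (f c 1 - f a 1)) := by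
  simp only [detR, Matrix.det_fin_three, Matrix.of_apply, Matrix.cons_val_zero,
    Matrix.cons_val_one, Matrix.head_cons, Matrix.cons_val_two, Matrix.tail_cons,
    PiLp.sub_apply]
  ring

lemma detR_swap1 (f : ℕ → EuclideanSpace ℝ (Fin 3)) (a b c d : ℕ) :
    detR f b a c d = - detR f a b c d := by simp only [detR_eq]; ring
lemma detR_swap2 (f : ℕ → EuclideanSpace ℝ (Fin 3)) (a b c d : ℕ) :
    detR f a c b d = - detR f a b c d := by simp only [detR_eq]; ring
lemma detR_swap3 (f : ℕ → EuclideanSpace ℝ (Fin 3)) (a b c d : ℕ) :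
    detR f a b d c = - detR f a b c d := by simp only [detR_eq]; ring

lemma detR_plucker (f : ℕ → EuclideanSpace ℝ (Fin 3)) (y₁ y₂ x₁ x₂ x₃ x₄ : ℕ) :
    detR f y₁ y₂ x₁ x₂ * detR f y₁ y₂ x₃ x₄ - detR f y₁ y₂ x₁ x₃ * detR f y₁ y₂ x₂ x₄
      + detR f y₁ y₂ x₁ x₄ * detR f y₁ y₂ x₂ x₃ = 0 := by
  simp only [detR_eq]; ring

lemma detR_sum (f : ℕ → EuclideanSpace ℝ (Fin 3)) (p₀ p₁ p₂ p₃ p₄ : ℕ) :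
    detR f p₁ p₂ p₃ p₄ - detR f p₀ p₂ p₃ p₄ + detR f p₀ p₁ p₃ p₄
      - detR f p₀ p₁ p₂ p₄ + detR f p₀ p₁ p₂ p₃ = 0 := by
  simp only [detR_eq]; ring

lemma detR_sumCoord (f : ℕ → EuclideanSpace ℝ (Fin 3)) (p₀ p₁ p₂ p₃ p₄ : ℕ) (k : Fin 3) :
    detR f p₁ p₂ p₃ p₄ * f p₀ k - detR f p₀ p₂ p₃ p₄ * f p₁ k + detR f p₀ p₁ p₃ p₄ * f p₂ k
      - detR f p₀ p₁ p₂ p₄ * f p₃ k + detR f p₀ p₁ p₂ p₃ * f p₄ k = 0 := by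
  fin_cases k <;>
    (simp only [Fin.zero_eta, Fin.mk_one, Fin.reduceFinMk, detR_eq]; ring)

lemma detR_ne_zero (f : ℕ → EuclideanSpace ℝ (Fin 3)) (a b c d : ℕ)
    (h : AffineIndependent ℝ ![f a, f b, f c, f d]) : detR f a b c d ≠ 0 := by
  intro h0
  obtain ⟨v, hv, hMv⟩ := (Matrix.exists_mulVec_eq_zero_iff).2 h0
  have hcoord : ∀ k : Fin 3,
      (f b k - f a k) * v 0 + (f c k - f a k) * v 1 + (f d k - f a k) * v 2 = 0 := by
    intro k
    have := congrFun hMv k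
    simpa [Matrix.mulVec, dotProduct, Fin.sum_univ_three, Matrix.of_apply,
      Matrix.cons_val_zero, Matrix.cons_val_one, Matrix.head_cons, Matrix.cons_val_two,
      Matrix.tail_cons, PiLp.sub_apply] using this
  have key := affineIndependent_iff.1 h Finset.univ ![-(v 0 + v 1 + v 2), v 0, v 1, v 2]
    (by simp [Fin.sum_univ_four]; ring) ?_
  · have h1 : v 0 = 0 := by simpa using key 1 (Finset.mem_univ _)
    have h2 : v 1 = 0 := by simpa using key 2 (Finset.mem_univ _)
    have h3 : v 2 = 0 := by simpa using key 3 (Finset.mem_univ _)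
    apply hv
    funext j
    fin_cases j <;> simp [h1, h2, h3]
  · ext k
    simp only [Fin.sum_univ_four, Matrix.cons_val_zero, Matrix.cons_val_one, Matrix.head_cons,
      Matrix.cons_val_two, Matrix.tail_cons, Matrix.cons_val_three, Matrix.head_fin_const,
      PiLp.add_apply, PiLp.smul_apply, smul_eq_mul, PiLp.zero_apply]
    have := hcoord k
    ring_nf
    ring_nf at this
    linarith

-- sign helpers
lemma isign_pos (x : ℝ) (h : 0 < x) : (SignType.sign x : ℤ) = 1 := by
  rw [sign_pos h]; rfl
lemma isign_negr (x : ℝ) (h : x < 0) : (SignType.sign x : ℤ) = -1 := by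
  rw [sign_neg h]; rfl
lemma isign_pm (x : ℝ) (hx : x ≠ 0) :
    (SignType.sign x : ℤ) = 1 ∨ (SignType.sign x : ℤ) = -1 := by
  rcases hx.lt_or_gt with h | h
  · exact Or.inr (isign_negr x h)
  · exact Or.inl (isign_pos x h)
lemma pos_of_isign (x : ℝ) (h : (SignType.sign x : ℤ) = 1) : 0 < x := by
  rcases lt_trichotomy x 0 with h' | h' | h'
  · rw [isign_negr x h'] at h; norm_num at h
  · subst h'; rw [sign_zero] at h; norm_num at h
  · exact h'
lemma neg_of_isign (x : ℝ) (h : (SignType.sign x : ℤ) = -1) : x < 0 := by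
  rcases lt_trichotomy x 0 with h' | h' | h'
  · exact h'
  · subst h'; rw [sign_zero] at h; norm_num at h
  · rw [isign_pos x h'] at h; norm_num at h

lemma sign_cases (x : ℝ) (hx : x ≠ 0) :
    ((SignType.sign x : ℤ) = 1 ∧ 0 < x) ∨ ((SignType.sign x : ℤ) = -1 ∧ x < 0) := by
  rcases hx.lt_or_gt with h | h
  · exact Or.inr ⟨isign_negr x h, h⟩
  · exact Or.inl ⟨isign_pos x h, h⟩

lemma gp_core (u v w : ℝ) (hu : u ≠ 0) (hv : v ≠ 0) (hw : w ≠ 0) (hid : u - v + w = 0) :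
    ({1, -1} : Set ℤ) ⊆
      {(SignType.sign u : ℤ), -(SignType.sign v : ℤ), (SignType.sign w : ℤ)} := by
  rcases sign_cases u hu with ⟨su, hu'⟩ | ⟨su, hu'⟩ <;>
  rcases sign_cases v hv with ⟨sv, hv'⟩ | ⟨sv, hv'⟩ <;>
  rcases sign_cases w hw with ⟨sw, hw'⟩ | ⟨sw, hw'⟩ <;>
  rw [su, sv, sw] <;>
  first
    | (exfalso; linarith)
    | (intro x hx
       simp only [Set.mem_insert_iff, Set.mem_singleton_iff] at hx ⊢
       rcases hx with rfl | rfl <;> norm_num)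

lemma detChi_def' (f : ℕ → EuclideanSpace ℝ (Fin 3)) (a b c d : ℕ) :
    detChi f a b c d = (SignType.sign (detR f a b c d) : ℤ) := rfl

/-- If `K` is a simplicial complex on `{1,…,n}` and `f : {1,…,n} → ℝ³` is such that every
four of the points are affinely independent and the convex hulls of the images of any
disjoint triangle/edge pair of `K` are disjoint, then the determinant-sign map is an
acyclic uniform rank-4 chirotope admissible for `K`. -/
theorem detChi_isChirotope_acyclic_admissible (n : ℕ) (K : Finset (Finset ℕ))
    (hKfaces : ∀ σ ∈ K, σ.Nonempty ∧ σ ⊆ Finset.Icc 1 n)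
    (hKdown : ∀ σ ∈ K, ∀ τ : Finset ℕ, τ ⊆ σ → τ.Nonempty → τ ∈ K)
    (f : ℕ → EuclideanSpace ℝ (Fin 3))
    (hgen : ∀ a ∈ Finset.Icc 1 n, ∀ b ∈ Finset.Icc 1 n, ∀ c ∈ Finset.Icc 1 n,
      ∀ d ∈ Finset.Icc 1 n, a ≠ b → a ≠ c → a ≠ d → b ≠ c → b ≠ d → c ≠ d →
      AffineIndependent ℝ ![f a, f b, f c, f d])
    (hdisj : ∀ F ∈ K, F.card = 3 → ∀ G ∈ K, G.card = 2 → F ∩ G = ∅ →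
      convexHull ℝ (f '' (F : Set ℕ)) ∩ convexHull ℝ (f '' (G : Set ℕ)) = ∅) :
    IsChirotope (Finset.Icc 1 n) (detChi f) ∧ IsAcyclic (Finset.Icc 1 n) (detChi f) ∧
      IsAdmissibleSC K (detChi f) := by
  classical
  refine ⟨⟨?_, ?_, ?_, ?_, ?_⟩, ?_, ?_⟩
  · -- values are ±1
    intro a ha b hb c hc d hd h1 h2 h3 h4 h5 h6
    rw [detChi_def']
    exact isign_pm _ (detR_ne_zero f a b c d (hgen a ha b hb c hc d hd h1 h2 h3 h4 h5 h6))
  · intro a _ b _ c _ d _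
    rw [detChi_def', detChi_def', detR_swap1, Left.sign_neg, SignType.coe_neg]
  · intro a _ b _ c _ d _
    rw [detChi_def', detChi_def', detR_swap2, Left.sign_neg, SignType.coe_neg]
  · intro a _ b _ c _ d _
    rw [detChi_def', detChi_def', detR_swap3, Left.sign_neg, SignType.coe_neg]
  · -- Grassmann–Plücker
    intro y₁ hy₁ y₂ hy₂ x₁ hx₁ x₂ hx₂ x₃ hx₃ x₄ hx₄ hy hx12 hx13 hx14 hx23 hx24 hx34
      h1y1 h1y2 h2y1 h2y2 h3y1 h3y2 h4y1 h4y2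
    have dAB := detR_ne_zero f y₁ y₂ x₁ x₂
      (hgen y₁ hy₁ y₂ hy₂ x₁ hx₁ x₂ hx₂ hy h1y1.symm h2y1.symm h1y2.symm h2y2.symm hx12)
    have dCD := detR_ne_zero f y₁ y₂ x₃ x₄
      (hgen y₁ hy₁ y₂ hy₂ x₃ hx₃ x₄ hx₄ hy h3y1.symm h4y1.symm h3y2.symm h4y2.symm hx34)
    have dE := detR_ne_zero f y₁ y₂ x₁ x₃
      (hgen y₁ hy₁ y₂ hy₂ x₁ hx₁ x₃ hx₃ hy h1y1.symm h3y1.symm h1y2.symm h3y2.symm hx13)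
    have dF := detR_ne_zero f y₁ y₂ x₂ x₄
      (hgen y₁ hy₁ y₂ hy₂ x₂ hx₂ x₄ hx₄ hy h2y1.symm h4y1.symm h2y2.symm h4y2.symm hx24)
    have dG := detR_ne_zero f y₁ y₂ x₁ x₄
      (hgen y₁ hy₁ y₂ hy₂ x₁ hx₁ x₄ hx₄ hy h1y1.symm h4y1.symm h1y2.symm h4y2.symm hx14)
    have dH := detR_ne_zero f y₁ y₂ x₂ x₃
      (hgen y₁ hy₁ y₂ hy₂ x₂ hx₂ x₃ hx₃ hy h2y1.symm h3y1.symm h2y2.symm h3y2.symm hx23)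
    simp only [detChi_def', ← SignType.coe_mul, ← sign_mul]
    exact gp_core _ _ _ (mul_ne_zero dAB dCD) (mul_ne_zero dE dF) (mul_ne_zero dG dH)
      (detR_plucker f y₁ y₂ x₁ x₂ x₃ x₄)
  · -- acyclic
    intro c hc hcE hall
    set M : Fin 5 → ℝ := fun i =>
      detR f (c (i.succAbove 0)) (c (i.succAbove 1)) (c (i.succAbove 2)) (c (i.succAbove 3))
      with hMdef
    have hM0 : M 0 = detR f (c 1) (c 2) (c 3) (c 4) := rfl
    have hM1 : M 1 = detR f (c 0) (c 2) (c 3) (c 4) := rfl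
    have hM2 : M 2 = detR f (c 0) (c 1) (c 3) (c 4) := rfl
    have hM3 : M 3 = detR f (c 0) (c 1) (c 2) (c 4) := rfl
    have hM4 : M 4 = detR f (c 0) (c 1) (c 2) (c 3) := rfl
    have hMne : ∀ i, M i ≠ 0 := by
      intro i
      refine detR_ne_zero f _ _ _ _
        (hgen _ (hcE _) _ (hcE _) _ (hcE _) _ (hcE _) ?_ ?_ ?_ ?_ ?_ ?_) <;>
        exact hc.injective.ne (Fin.succAbove_right_injective.ne (by decide))
    have hsum : M 0 - M 1 + M 2 - M 3 + M 4 = 0 := by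
      rw [hM0, hM1, hM2, hM3, hM4]; exact detR_sum f (c 0) (c 1) (c 2) (c 3) (c 4)
    have hcirc : ∀ i, circSign (detChi f) c i
        = (-1 : ℤ) ^ ((i : ℕ) + 1) * (SignType.sign (M i) : ℤ) := fun i => rfl
    have cs0 : circSign (detChi f) c 0 = -(SignType.sign (M 0) : ℤ) := by
      rw [hcirc]; norm_num
    have cs1 : circSign (detChi f) c 1 = (SignType.sign (M 1) : ℤ) := by
      rw [hcirc]; norm_num
    have cs2 : circSign (detChi f) c 2 = -(SignType.sign (M 2) : ℤ) := by
      rw [hcirc]; norm_num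
    have cs3 : circSign (detChi f) c 3 = (SignType.sign (M 3) : ℤ) := by
      rw [hcirc, show ((3 : Fin 5) : ℕ) = 3 from rfl]; norm_num
    have cs4 : circSign (detChi f) c 4 = -(SignType.sign (M 4) : ℤ) := by
      rw [hcirc, show ((4 : Fin 5) : ℕ) = 4 from rfl]; norm_num
    rcases isign_pm (M 0) (hMne 0) with ht | ht
    · have m0 : 0 < M 0 := pos_of_isign _ ht
      have m1 : M 1 < 0 := neg_of_isign _ (by
        have h := hall 1 0; rw [cs1, cs0, ht] at h; linarith)
      have m2 : 0 < M 2 := pos_of_isign _ (by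
        have h := hall 2 0; rw [cs2, cs0, ht] at h; linarith)
      have m3 : M 3 < 0 := neg_of_isign _ (by
        have h := hall 3 0; rw [cs3, cs0, ht] at h; linarith)
      have m4 : 0 < M 4 := pos_of_isign _ (by
        have h := hall 4 0; rw [cs4, cs0, ht] at h; linarith)
      linarith
    · have m0 : M 0 < 0 := neg_of_isign _ ht
      have m1 : 0 < M 1 := pos_of_isign _ (by
        have h := hall 1 0; rw [cs1, cs0, ht] at h; linarith)
      have m2 : M 2 < 0 := neg_of_isign _ (by
        have h := hall 2 0; rw [cs2, cs0, ht] at h; linarith)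
      have m3 : 0 < M 3 := pos_of_isign _ (by
        have h := hall 3 0; rw [cs3, cs0, ht] at h; linarith)
      have m4 : M 4 < 0 := neg_of_isign _ (by
        have h := hall 4 0; rw [cs4, cs0, ht] at h; linarith)
      linarith
  · -- admissible
    intro F hF hF3 G hG hG2 hFG c hc himg ⟨ε, hε, hF5, hG5⟩
    have hcFG : ∀ i, c i ∈ F ∪ G := by
      intro i
      rw [← himg]
      exact Finset.mem_image_of_mem c (mem_univ i)
    have hGnotF : ∀ i, c i ∉ F → c i ∈ G := fun i h =>
      (Finset.mem_union.1 (hcFG i)).resolve_left h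
    have hcE : ∀ i, c i ∈ Finset.Icc 1 n := by
      intro i
      rcases Finset.mem_union.1 (hcFG i) with h | h
      · exact (hKfaces F hF).2 h
      · exact (hKfaces G hG).2 h
    set M : Fin 5 → ℝ := fun i =>
      detR f (c (i.succAbove 0)) (c (i.succAbove 1)) (c (i.succAbove 2)) (c (i.succAbove 3))
      with hMdef
    have hM0 : M 0 = detR f (c 1) (c 2) (c 3) (c 4) := rfl
    have hM1 : M 1 = detR f (c 0) (c 2) (c 3) (c 4) := rfl
    have hM2 : M 2 = detR f (c 0) (c 1) (c 3) (c 4) := rfl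
    have hM3 : M 3 = detR f (c 0) (c 1) (c 2) (c 4) := rfl
    have hM4 : M 4 = detR f (c 0) (c 1) (c 2) (c 3) := rfl
    have hsum : M 0 - M 1 + M 2 - M 3 + M 4 = 0 := by
      rw [hM0, hM1, hM2, hM3, hM4]; exact detR_sum f (c 0) (c 1) (c 2) (c 3) (c 4)
    have hvec : ∀ k : Fin 3, M 0 * f (c 0) k - M 1 * f (c 1) k + M 2 * f (c 2) k
        - M 3 * f (c 3) k + M 4 * f (c 4) k = 0 := by
      intro k
      rw [hM0, hM1, hM2, hM3, hM4]; exact detR_sumCoord f (c 0) (c 1) (c 2) (c 3) (c 4) k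
    have hcirc : ∀ i, circSign (detChi f) c i
        = (-1 : ℤ) ^ ((i : ℕ) + 1) * (SignType.sign (M i) : ℤ) := fun i => rfl
    have hsgn : ∀ i : Fin 5,
        (SignType.sign ((-1 : ℝ) ^ (i : ℕ) * M i) : ℤ) = - circSign (detChi f) c i := by
      intro i
      rw [hcirc i]
      fin_cases i
      · norm_num
      · norm_num [Left.sign_neg, neg_one_mul]
      · norm_num
      · norm_num [Left.sign_neg, neg_one_mul]
      · norm_num
    set μ : Fin 5 → ℝ := fun i => (-(ε : ℝ)) * ((-1 : ℝ) ^ (i : ℕ) * M i) with hμdef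
    set p : Fin 5 → EuclideanSpace ℝ (Fin 3) := fun i => f (c i) with hpdef
    have hApos : ∀ i : Fin 5, c i ∈ F → 0 < μ i := by
      intro i hiF
      have h := hsgn i
      rw [hF5 i hiF] at h
      rcases hε with rfl | rfl
      · have h2 := neg_of_isign _ h
        simp only [hμdef]
        push_cast
        nlinarith
      · norm_num at h
        have h2 := pos_of_isign _ h
        simp only [hμdef]
        push_cast
        nlinarith
    have hBneg : ∀ i : Fin 5, c i ∉ F → μ i < 0 := by
      intro i hiF
      have h := hsgn i
      rw [hG5 i (hGnotF i hiF)] at h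
      norm_num at h
      rcases hε with rfl | rfl
      · have h2 := pos_of_isign _ h
        simp only [hμdef]
        push_cast
        nlinarith
      · norm_num at h
        have h2 := neg_of_isign _ h
        simp only [hμdef]
        push_cast
        nlinarith
    have hμsum : ∑ i : Fin 5, μ i = 0 := by
      rw [Fin.sum_univ_five]
      simp only [hμdef]
      rw [show ((0 : Fin 5) : ℕ) = 0 from rfl, show ((1 : Fin 5) : ℕ) = 1 from rfl,
        show ((2 : Fin 5) : ℕ) = 2 from rfl, show ((3 : Fin 5) : ℕ) = 3 from rfl,
        show ((4 : Fin 5) : ℕ) = 4 from rfl]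
      linear_combination (-(ε : ℝ)) * hsum
    have hμvec : ∑ i : Fin 5, μ i • p i = 0 := by
      ext k
      simp only [Fin.sum_univ_five, PiLp.add_apply, PiLp.smul_apply, smul_eq_mul,
        PiLp.zero_apply, hμdef, hpdef]
      rw [show ((0 : Fin 5) : ℕ) = 0 from rfl, show ((1 : Fin 5) : ℕ) = 1 from rfl,
        show ((2 : Fin 5) : ℕ) = 2 from rfl, show ((3 : Fin 5) : ℕ) = 3 from rfl,
        show ((4 : Fin 5) : ℕ) = 4 from rfl]
      linear_combination (-(ε : ℝ)) * hvec k
    set A : Finset (Fin 5) := Finset.univ.filter (fun i => c i ∈ F) with hAdef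
    set B : Finset (Fin 5) := Finset.univ.filter (fun i => ¬ c i ∈ F) with hBdef
    have hsplitS : ∑ i ∈ A, μ i + ∑ i ∈ B, μ i = 0 := by
      rw [hAdef, hBdef, Finset.sum_filter_add_sum_filter_not]; exact hμsum
    have hsplitV : ∑ i ∈ A, μ i • p i + ∑ i ∈ B, μ i • p i = 0 := by
      rw [hAdef, hBdef, Finset.sum_filter_add_sum_filter_not]; exact hμvec
    have hAne : A.Nonempty := by
      have hFne : F.Nonempty := Finset.card_pos.1 (by rw [hF3]; norm_num)
      obtain ⟨x, hx⟩ := hFne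
      have : x ∈ Finset.image c Finset.univ := by
        rw [himg]; exact Finset.mem_union_left G hx
      obtain ⟨i, _, rfl⟩ := Finset.mem_image.1 this
      exact ⟨i, by simp [hAdef, hx]⟩
    have hSA : 0 < ∑ i ∈ A, μ i :=
      Finset.sum_pos (fun i hi => hApos i (Finset.mem_filter.1 hi).2) hAne
    have hSB : ∑ i ∈ B, -μ i = ∑ i ∈ A, μ i := by
      rw [Finset.sum_neg_distrib]; linarith
    have hVB : ∑ i ∈ B, (-μ i) • p i = ∑ i ∈ A, μ i • p i := by
      simp only [neg_smul]
      rw [Finset.sum_neg_distrib]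
      have : ∑ i ∈ A, μ i • p i = -∑ i ∈ B, μ i • p i := by
        rwa [add_eq_zero_iff_eq_neg] at hsplitV
      rw [this]
    have hcm : A.centerMass μ p = B.centerMass (fun i => -μ i) p := by
      unfold Finset.centerMass
      rw [hSB, hVB]
    have hxF : A.centerMass μ p ∈ convexHull ℝ (f '' (F : Set ℕ)) :=
      Finset.centerMass_mem_convexHull A
        (fun i hi => (hApos i (Finset.mem_filter.1 hi).2).le) hSA
        (fun i hi => ⟨c i, (Finset.mem_filter.1 hi).2, rfl⟩)
    have hyG : B.centerMass (fun i => -μ i) p ∈ convexHull ℝ (f '' (G : Set ℕ)) :=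
      Finset.centerMass_mem_convexHull B
        (fun i hi => (neg_pos.2 (hBneg i (Finset.mem_filter.1 hi).2)).le)
        (by rw [hSB]; exact hSA)
        (fun i hi => ⟨c i, hGnotF i (Finset.mem_filter.1 hi).2, rfl⟩)
    have hmem : A.centerMass μ p ∈
        convexHull ℝ (f '' (F : Set ℕ)) ∩ convexHull ℝ (f '' (G : Set ℕ)) :=
      ⟨hxF, by rw [hcm]; exact hyG⟩
    rw [hdisj F hF hF3 G hG hG2 hFG] at hmem
    exact hmem
end

section
/- Let 𝒮 and 𝒯 be combinatorial closed orientable surfaces of genera g_𝒮 and g_𝒯 on disjoint vertex sets V_𝒮 and V_𝒯, let T₁ ∈ 𝒮 and T₂ ∈ 𝒯 be triangles, and let 𝒳 be the connected sum obtained from (𝒮 ∖ {T₁}) ∪ (𝒯 ∖ {T₂}) by identifying the three vertices of T₂ with the three vertices of T₁ via a fixed bijection. Then 𝒳 is a combinatorial closed orientable surface of genus g_𝒮 + g_𝒯 with |V_𝒮| + |V_𝒯| − 3 vertices, and if 𝒮 ∖ {T₁} admits no embedding into ℝ³, then 𝒳 admits no embedding into ℝ³. -/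
open Finset

/-- The vertices of a set of triangles. -/
def vertsOf (K : Finset (Finset ℕ)) : Finset ℕ := K.biUnion id

/-- The edges of a set of triangles: all 2-element subsets of its members. -/
def edgesOf (K : Finset (Finset ℕ)) : Finset (Finset ℕ) :=
  K.biUnion fun T => T.powersetCard 2

/-- The three directed edges induced by the cyclic ordering `(t.1, t.2.1, t.2.2)`. -/
def dedges (t : ℕ × ℕ × ℕ) : Finset (ℕ × ℕ) :=
  {(t.1, t.2.1), (t.2.1, t.2.2), (t.2.2, t.1)}

/-- A combinatorial closed orientable surface of genus `g` on the vertex set `V`: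
a nonempty set of triangles on `V` covering `V`, each edge lies in exactly two
triangles, the triangles around each vertex form a single cycle under sharing an
edge through that vertex (formalized as connectivity of that adjacency relation),
the complex is connected, it carries a coherent orientation (a cyclic ordering of
each triangle inducing opposite orderings on each shared edge), and
`|V| - |E| + |F| = 2 - 2g`. -/
def IsCombSurface (V : Finset ℕ) (K : Finset (Finset ℕ)) (g : ℕ) : Prop :=
  K.Nonempty ∧
  (∀ T ∈ K, T.card = 3 ∧ T ⊆ V) ∧
  (∀ v ∈ V, ∃ T ∈ K, v ∈ T) ∧
  (∀ e : Finset ℕ, e.card = 2 → (∃ T ∈ K, e ⊆ T) →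
      (K.filter fun T => e ⊆ T).card = 2) ∧
  (∀ v ∈ V, ∀ T₁ ∈ K, ∀ T₂ ∈ K, v ∈ T₁ → v ∈ T₂ →
      Relation.ReflTransGen
        (fun A B => A ∈ K ∧ B ∈ K ∧ v ∈ A ∧ v ∈ B ∧ (A ∩ B).card = 2) T₁ T₂) ∧
  (∀ T₁ ∈ K, ∀ T₂ ∈ K,
      Relation.ReflTransGen (fun A B => A ∈ K ∧ B ∈ K ∧ (A ∩ B).card = 2) T₁ T₂) ∧
  (∃ ω : Finset ℕ → ℕ × ℕ × ℕ,
      (∀ T ∈ K, ({(ω T).1, (ω T).2.1, (ω T).2.2} : Finset ℕ) = T) ∧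
      (∀ T₁ ∈ K, ∀ T₂ ∈ K, T₁ ≠ T₂ → ∀ a b : ℕ, a ≠ b →
          a ∈ T₁ ∩ T₂ → b ∈ T₁ ∩ T₂ →
          (a, b) ∈ dedges (ω T₁) → (b, a) ∈ dedges (ω T₂))) ∧
  ((V.card : ℤ) - ((edgesOf K).card : ℤ) + (K.card : ℤ) = 2 - 2 * (g : ℤ))

/-- A face of a set of triangles: a nonempty subset of one of its triangles. -/
def IsFaceOf (K : Finset (Finset ℕ)) (σ : Finset ℕ) : Prop :=
  σ.Nonempty ∧ ∃ T ∈ K, σ ⊆ T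

/-- `K` admits an embedding into ℝ³: a map on the vertices with every four image
points affinely independent such that disjoint faces have disjoint convex hulls. -/
def AdmitsEmbedding (K : Finset (Finset ℕ)) : Prop :=
  ∃ f : ℕ → EuclideanSpace ℝ (Fin 3),
    (∀ a ∈ vertsOf K, ∀ b ∈ vertsOf K, ∀ c ∈ vertsOf K, ∀ d ∈ vertsOf K,
      a ≠ b → a ≠ c → a ≠ d → b ≠ c → b ≠ d → c ≠ d →
      AffineIndependent ℝ ![f a, f b, f c, f d]) ∧
    (∀ σ τ : Finset ℕ, IsFaceOf K σ → IsFaceOf K τ → σ ∩ τ = ∅ →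
      convexHull ℝ (f '' (σ : Set ℕ)) ∩ convexHull ℝ (f '' (τ : Set ℕ)) = ∅)





variable {α : Type*} [DecidableEq α]

lemma two_of_card_two {s : Finset α} (h : s.card = 2) {a : α} (ha : a ∈ s) :
    ∃ b, b ≠ a ∧ s = {a, b} := by
  obtain ⟨x, y, hxy, rfl⟩ := Finset.card_eq_two.mp h
  rcases Finset.mem_insert.mp ha with rfl | ha'
  · exact ⟨y, fun h => hxy h.symm, rfl⟩
  · rcases Finset.mem_singleton.mp ha' with rfl
    exact ⟨x, hxy, Finset.pair_comm _ _⟩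

lemma even_card_of_invol : ∀ (n : ℕ) (s : Finset α) (f : α → α), s.card = n →
    (∀ a ∈ s, f a ∈ s) → (∀ a ∈ s, f (f a) = a) → (∀ a ∈ s, f a ≠ a) →
    Even s.card := by
  intro n
  induction n using Nat.strong_induction_on with
  | _ n ih =>
    intro s f hn hmem hinv hne
    rcases s.eq_empty_or_nonempty with rfl | ⟨a, ha⟩
    · simp
    · have hfa : f a ∈ s := hmem a ha
      have hfa' : f a ∈ s.erase a := Finset.mem_erase.mpr ⟨hne a ha, hfa⟩
      set t := (s.erase a).erase (f a) with ht
      have hts : ∀ b ∈ t, b ∈ s ∧ b ≠ a ∧ b ≠ f a := by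
        intro b hb
        rw [ht] at hb
        obtain ⟨h1, h2⟩ := Finset.mem_erase.mp hb
        obtain ⟨h3, h4⟩ := Finset.mem_erase.mp h2
        exact ⟨h4, h3, h1⟩
      have h1 : ∀ b ∈ t, f b ∈ t := by
        intro b hb
        obtain ⟨hbs, hba, hbfa⟩ := hts b hb
        refine Finset.mem_erase.mpr ⟨?_, Finset.mem_erase.mpr ⟨?_, hmem b hbs⟩⟩
        · intro h; exact hba (by rw [← hinv b hbs, h, hinv a ha])
        · intro h; exact hbfa (by rw [← hinv b hbs, h])
      have hpos : 2 ≤ s.card := by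
        have h1 := Finset.card_erase_of_mem ha
        have h2 : 0 < (s.erase a).card := Finset.card_pos.mpr ⟨f a, hfa'⟩
        omega
      have hcard : t.card = n - 2 := by
        rw [ht, Finset.card_erase_of_mem hfa', Finset.card_erase_of_mem ha, hn]
        omega
      have ht2 : Even t.card :=
        ih (n - 2) (by omega) t f hcard h1
          (fun b hb => hinv b (hts b hb).1) (fun b hb => hne b (hts b hb).1)
      have hsc : s.card = t.card + 2 := by rw [hcard]; omega
      rw [hsc]
      exact ht2.add even_two

lemma conn_erase {K : Finset α} {R : α → α → Prop} [DecidableRel R]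
    (hsym : ∀ a ∈ K, ∀ b ∈ K, R a b → R b a) (hirr : ∀ a ∈ K, ¬ R a a)
    (hdeg : ∀ a ∈ K, (K.filter (fun b => R a b)).card = 2)
    (hconn : ∀ a ∈ K, ∀ b ∈ K,
      Relation.ReflTransGen (fun c d => c ∈ K ∧ d ∈ K ∧ R c d) a b)
    {x : α} (hx : x ∈ K) :
    ∀ a ∈ K.erase x, ∀ b ∈ K.erase x,
      Relation.ReflTransGen (fun c d => c ∈ K.erase x ∧ d ∈ K.erase x ∧ R c d) a b := by
  classical
  intro a ha b hb
  by_contra hab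
  set R' : α → α → Prop := fun c d => c ∈ K.erase x ∧ d ∈ K.erase x ∧ R c d with hR'
  set C : Finset α := (K.erase x).filter (fun c => Relation.ReflTransGen R' a c) with hC
  have haC : a ∈ C := Finset.mem_filter.mpr ⟨ha, Relation.ReflTransGen.refl⟩
  have hCsub : C ⊆ K.erase x := Finset.filter_subset _ _
  have hCK : ∀ c ∈ C, c ∈ K := fun c hc => Finset.mem_of_mem_erase (hCsub hc)
  have hCx : ∀ c ∈ C, c ≠ x := fun c hc => Finset.ne_of_mem_erase (hCsub hc)
  have hbC : b ∉ C := fun h => hab ((Finset.mem_filter.mp h).2)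
  have hclose : ∀ c ∈ C, ∀ d ∈ K, R c d → d = x ∨ d ∈ C := by
    intro c hc d hd hR
    by_cases hdx : d = x
    · exact Or.inl hdx
    · right
      have hd' : d ∈ K.erase x := Finset.mem_erase.mpr ⟨hdx, hd⟩
      obtain ⟨hc', hpath⟩ := Finset.mem_filter.mp hc
      exact Finset.mem_filter.mpr ⟨hd', hpath.tail ⟨hc', hd', hR⟩⟩
  have hsplit : ∀ c ∈ C,
      K.filter (fun d => R c d)
        = (C.filter (fun d => R c d)) ∪ (({x} : Finset α).filter (fun d => R c d)) := by
    intro c hc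
    ext d
    simp only [Finset.mem_filter, Finset.mem_union, Finset.mem_singleton]
    constructor
    · rintro ⟨hdK, hRcd⟩
      rcases hclose c hc d hdK hRcd with rfl | hdC
      · exact Or.inr ⟨rfl, hRcd⟩
      · exact Or.inl ⟨hdC, hRcd⟩
    · rintro (⟨hdC, hRcd⟩ | ⟨rfl, hRcd⟩)
      · exact ⟨hCK d hdC, hRcd⟩
      · exact ⟨hx, hRcd⟩
  have hdegC : ∀ c ∈ C,
      (C.filter (fun d => R c d)).card + (if R c x then 1 else 0) = 2 := by
    intro c hc
    have hdisj : Disjoint (C.filter (fun d => R c d))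
        (({x} : Finset α).filter (fun d => R c d)) := by
      refine Finset.disjoint_left.mpr ?_
      intro d hdC hdx
      have hdx' : d = x := by simpa using (Finset.mem_filter.mp hdx).1
      exact hCx d (Finset.mem_filter.mp hdC).1 hdx'
    have h2 := hdeg c (hCK c hc)
    rw [hsplit c hc, Finset.card_union_of_disjoint hdisj] at h2
    have hxcard : (({x} : Finset α).filter (fun d => R c d)).card
        = if R c x then 1 else 0 := by
      by_cases h : R c x <;> simp [Finset.filter_singleton, h]
    omega
  set E : Finset (α × α) := (C ×ˢ C).filter (fun p => R p.1 p.2) with hE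
  have hmemE : ∀ p : α × α, p ∈ E ↔ p.1 ∈ C ∧ p.2 ∈ C ∧ R p.1 p.2 := by
    intro p
    simp only [hE, Finset.mem_filter, Finset.mem_product]
    tauto
  have hEeven : Even E.card := by
    refine even_card_of_invol E.card E Prod.swap rfl ?_ ?_ ?_
    · intro p hp
      obtain ⟨h1, h2, h3⟩ := (hmemE p).mp hp
      exact (hmemE p.swap).mpr ⟨h2, h1, hsym _ (hCK _ h1) _ (hCK _ h2) h3⟩
    · intro p _; simp
    · intro p hp h
      obtain ⟨h1, _, h3⟩ := (hmemE p).mp hp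
      have h12 : p.1 = p.2 := by
        have := congrArg Prod.fst h
        simpa using this.symm
      exact hirr p.1 (hCK _ h1) (h12 ▸ h3)
  have hEcard : E.card = ∑ c ∈ C, (C.filter (fun d => R c d)).card := by
    rw [Finset.card_eq_sum_card_fiberwise
      (f := Prod.fst) (t := C) (fun p hp => ((hmemE p).mp hp).1)]
    refine Finset.sum_congr rfl (fun c hc => ?_)
    have himg : E.filter (fun p => p.1 = c)
        = (C.filter (fun d => R c d)).image (fun d => (c, d)) := by
      ext ⟨p1, p2⟩
      simp only [Finset.mem_filter, Finset.mem_image]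
      constructor
      · rintro ⟨hp, rfl⟩
        obtain ⟨h1, h2, h3⟩ := (hmemE (p1, p2)).mp hp
        exact ⟨p2, ⟨h2, h3⟩, rfl⟩
      · rintro ⟨d, ⟨hd1, hd2⟩, h⟩
        rw [Prod.mk.injEq] at h
        obtain ⟨rfl, rfl⟩ := h
        exact ⟨(hmemE (c, d)).mpr ⟨hc, hd1, hd2⟩, rfl⟩
    rw [himg, Finset.card_image_of_injective _ (fun d1 d2 h => by simpa using h)]
  set n := (C.filter (fun c => R c x)).card with hn
  have hsum : E.card + n = 2 * C.card := by
    have h2 : ∑ c ∈ C, ((C.filter (fun d => R c d)).card + (if R c x then 1 else 0))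
        = 2 * C.card := by
      rw [Finset.sum_congr rfl hdegC, Finset.sum_const, smul_eq_mul, mul_comm]
    rw [Finset.sum_add_distrib] at h2
    have h3 : ∑ c ∈ C, (if R c x then 1 else 0) = n := by
      rw [hn]
      simp [Finset.sum_boole]
    rw [hEcard]
    omega
  have hneven : Even n := by
    obtain ⟨k, hk⟩ := hEeven
    rw [Nat.even_iff]
    omega
  by_cases H2 : ∀ d ∈ K, R x d → d ∈ C
  · have hreach : ∀ c, Relation.ReflTransGen (fun c d => c ∈ K ∧ d ∈ K ∧ R c d) a c
        → c ∈ C ∨ c = x := by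
      intro c hc
      induction hc with
      | refl => exact Or.inl haC
      | @tail p q hp hstep ih =>
        obtain ⟨h1, h2, h3⟩ := hstep
        rcases ih with hC1 | rfl
        · rcases hclose _ hC1 _ h2 h3 with rfl | h
          · exact Or.inr rfl
          · exact Or.inl h
        · exact Or.inl (H2 _ h2 h3)
    rcases hreach b (hconn a (hCK a haC) b (Finset.mem_of_mem_erase hb)) with h | rfl
    · exact hbC h
    · exact (Finset.mem_erase.mp hb).1 rfl
  · push_neg at H2
    obtain ⟨d, hdK, hRxd, hdC⟩ := H2
    have hn1 : n ≤ 1 := by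
      have hsub : C.filter (fun c => R c x) ⊆ (K.filter (fun e => R x e)).erase d := by
        intro c hc
        obtain ⟨hcC, hcx⟩ := Finset.mem_filter.mp hc
        refine Finset.mem_erase.mpr ⟨?_,
          Finset.mem_filter.mpr ⟨hCK c hcC, hsym _ (hCK c hcC) _ hx hcx⟩⟩
        rintro rfl; exact hdC hcC
      have hle := Finset.card_le_card hsub
      rw [Finset.card_erase_of_mem (Finset.mem_filter.mpr ⟨hdK, hRxd⟩), hdeg x hx] at hle
      omega
    have hn0 : n = 0 := by
      obtain ⟨k, hk⟩ := hneven
      omega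
    have hreach : ∀ c, Relation.ReflTransGen (fun c d => c ∈ K ∧ d ∈ K ∧ R c d) a c
        → c ∈ C := by
      intro c hc
      induction hc with
      | refl => exact haC
      | @tail p q hp hstep ih =>
        obtain ⟨h1, h2, h3⟩ := hstep
        rcases hclose _ ih _ h2 h3 with hqx | h
        · exfalso
          rw [hqx] at h3
          have hmem' : p ∈ C.filter (fun c => R c x) := Finset.mem_filter.mpr ⟨ih, h3⟩
          have := Finset.card_pos.mpr ⟨_, hmem'⟩
          omega
        · exact h
    exact hCx x (hreach x (hconn a (hCK a haC) x hx)) rfl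



/-- The three directed edges induced by the cyclic ordering `(t.1, t.2.1, t.2.2)`. -/


def revt (t : ℕ × ℕ × ℕ) : ℕ × ℕ × ℕ := (t.2.2, t.2.1, t.1)

def mapt (φ : ℕ → ℕ) (t : ℕ × ℕ × ℕ) : ℕ × ℕ × ℕ := (φ t.1, φ t.2.1, φ t.2.2)

lemma mem_dedges {t : ℕ × ℕ × ℕ} {a b : ℕ} :
    (a, b) ∈ dedges t ↔
      (a = t.1 ∧ b = t.2.1) ∨ (a = t.2.1 ∧ b = t.2.2) ∨ (a = t.2.2 ∧ b = t.1) := by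
  simp [dedges, Prod.ext_iff]

lemma mem_dedges_revt {t : ℕ × ℕ × ℕ} {a b : ℕ} :
    (a, b) ∈ dedges (revt t) ↔ (b, a) ∈ dedges t := by
  simp only [revt, mem_dedges]
  tauto

lemma vset_revt (t : ℕ × ℕ × ℕ) :
    ({(revt t).1, (revt t).2.1, (revt t).2.2} : Finset ℕ)
      = {t.1, t.2.1, t.2.2} := by
  simp only [revt]
  ext u
  simp only [Finset.mem_insert, Finset.mem_singleton]
  tauto

lemma mem_dedges_mapt {φ : ℕ → ℕ} {t : ℕ × ℕ × ℕ} {a b : ℕ}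
    (h : (a, b) ∈ dedges t) : (φ a, φ b) ∈ dedges (mapt φ t) := by
  simp only [mem_dedges, mapt] at *
  rcases h with ⟨rfl, rfl⟩ | ⟨rfl, rfl⟩ | ⟨rfl, rfl⟩ <;> tauto

lemma mem_dedges_mapt_iff {φ : ℕ → ℕ} {V : Finset ℕ} (hinj : Set.InjOn φ (V : Set ℕ))
    {t : ℕ × ℕ × ℕ} (h1 : t.1 ∈ V) (h2 : t.2.1 ∈ V) (h3 : t.2.2 ∈ V)
    {a b : ℕ} (ha : a ∈ V) (hb : b ∈ V) :
    (φ a, φ b) ∈ dedges (mapt φ t) ↔ (a, b) ∈ dedges t := by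
  constructor
  · intro h
    simp only [mem_dedges, mapt] at h ⊢
    rcases h with ⟨e1, e2⟩ | ⟨e1, e2⟩ | ⟨e1, e2⟩
    · exact Or.inl ⟨hinj ha h1 e1, hinj hb h2 e2⟩
    · exact Or.inr (Or.inl ⟨hinj ha h2 e1, hinj hb h3 e2⟩)
    · exact Or.inr (Or.inr ⟨hinj ha h3 e1, hinj hb h1 e2⟩)
  · exact mem_dedges_mapt

lemma card3_distinct {x y z : ℕ} (h : ({x, y, z} : Finset ℕ).card = 3) :
    x ≠ y ∧ x ≠ z ∧ y ≠ z := by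
  refine ⟨?_, ?_, ?_⟩
  · rintro rfl
    have hsub : ({x, x, z} : Finset ℕ) ⊆ {x, z} := by
      intro u hu; simp only [Finset.mem_insert, Finset.mem_singleton] at hu ⊢; tauto
    have h2 : ({x, z} : Finset ℕ).card ≤ 2 := by
      have := Finset.card_insert_le x ({z} : Finset ℕ); simpa using this
    have := Finset.card_le_card hsub
    omega
  · rintro rfl
    have hsub : ({x, y, x} : Finset ℕ) ⊆ {x, y} := by
      intro u hu; simp only [Finset.mem_insert, Finset.mem_singleton] at hu ⊢; tauto
    have h2 : ({x, y} : Finset ℕ).card ≤ 2 := by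
      have := Finset.card_insert_le x ({y} : Finset ℕ); simpa using this
    have := Finset.card_le_card hsub
    omega
  · rintro rfl
    have hsub : ({x, y, y} : Finset ℕ) ⊆ {x, y} := by
      intro u hu; simp only [Finset.mem_insert, Finset.mem_singleton] at hu ⊢; tauto
    have h2 : ({x, y} : Finset ℕ).card ≤ 2 := by
      have := Finset.card_insert_le x ({y} : Finset ℕ); simpa using this
    have := Finset.card_le_card hsub
    omega

lemma mem_of_card3 {x y z u : ℕ} (h : u ∈ ({x, y, z} : Finset ℕ)) :
    u = x ∨ u = y ∨ u = z := by
  simpa using h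

set_option maxHeartbeats 1000000 in
lemma dedges_eq_or_rev {t u : ℕ × ℕ × ℕ}
    (hset : ({t.1, t.2.1, t.2.2} : Finset ℕ) = {u.1, u.2.1, u.2.2})
    (hcard : ({t.1, t.2.1, t.2.2} : Finset ℕ).card = 3) :
    (∀ a b : ℕ, (a, b) ∈ dedges t ↔ (a, b) ∈ dedges u) ∨
    (∀ a b : ℕ, (a, b) ∈ dedges t ↔ (b, a) ∈ dedges u) := by
  obtain ⟨x, y, z⟩ := t
  obtain ⟨p, q, r⟩ := u
  simp only at hset hcard ⊢
  obtain ⟨hxy, hxz, hyz⟩ := card3_distinct hcard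
  obtain ⟨hpq, hpr, hqr⟩ := card3_distinct (hset ▸ hcard)
  have hx : x = p ∨ x = q ∨ x = r := mem_of_card3 (hset ▸ (by simp : x ∈ ({x,y,z} : Finset ℕ)))
  have hy : y = p ∨ y = q ∨ y = r := mem_of_card3 (hset ▸ (by simp : y ∈ ({x,y,z} : Finset ℕ)))
  have hz : z = p ∨ z = q ∨ z = r := mem_of_card3 (hset ▸ (by simp : z ∈ ({x,y,z} : Finset ℕ)))
  rcases hx with rfl | rfl | rfl <;> rcases hy with rfl | rfl | rfl <;>
    rcases hz with rfl | rfl | rfl <;>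
    first
      | (exfalso; omega)
      | (left; intro a b; simp only [mem_dedges]; all_goals omega)
      | (right; intro a b; simp only [mem_dedges]; all_goals omega)

section Surface

lemma other_triangle {K : Finset (Finset ℕ)}
    (hedge : ∀ e : Finset ℕ, e.card = 2 → (∃ A ∈ K, e ⊆ A) →
      (K.filter fun A => e ⊆ A).card = 2)
    {A e : Finset ℕ} (hA : A ∈ K) (he : e.card = 2) (heA : e ⊆ A) :
    ∃ B ∈ K, B ≠ A ∧ e ⊆ B ∧ ∀ B' ∈ K, e ⊆ B' → B' = A ∨ B' = B := by
  have h2 := hedge e he ⟨A, hA, heA⟩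
  have hAf : A ∈ K.filter (fun B => e ⊆ B) := Finset.mem_filter.mpr ⟨hA, heA⟩
  obtain ⟨B, hBA, hset⟩ := two_of_card_two h2 hAf
  have hBf : B ∈ K.filter (fun B => e ⊆ B) := by rw [hset]; simp
  refine ⟨B, (Finset.mem_filter.mp hBf).1, hBA, (Finset.mem_filter.mp hBf).2, ?_⟩
  intro B' hB' he'
  have hmem : B' ∈ K.filter (fun B => e ⊆ B) := Finset.mem_filter.mpr ⟨hB', he'⟩
  rw [hset] at hmem
  simpa using hmem

lemma pair_card_two {v w : ℕ} (h : v ≠ w) : ({v, w} : Finset ℕ).card = 2 := by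
  rw [Finset.card_insert_of_notMem (by simpa using h), Finset.card_singleton]

lemma inter_card_two {A B : Finset ℕ} (hA3 : A.card = 3) (hB3 : B.card = 3)
    (hne : A ≠ B) {v w : ℕ} (hv : v ∈ A) (hv' : v ∈ B) (hw : w ∈ A) (hw' : w ∈ B)
    (hvw : v ≠ w) : (A ∩ B).card = 2 := by
  have hsub : ({v, w} : Finset ℕ) ⊆ A ∩ B := by
    intro u hu
    rcases Finset.mem_insert.mp hu with rfl | hu
    · exact Finset.mem_inter.mpr ⟨hv, hv'⟩
    · rw [Finset.mem_singleton.mp hu]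
      exact Finset.mem_inter.mpr ⟨hw, hw'⟩
  have h2 : 2 ≤ (A ∩ B).card := by
    have := Finset.card_le_card hsub
    rwa [pair_card_two hvw] at this
  have h3 : (A ∩ B).card ≤ 3 := by
    have := Finset.card_le_card (Finset.inter_subset_left (s₁ := A) (s₂ := B))
    omega
  rcases Nat.lt_or_ge (A ∩ B).card 3 with h | h
  · omega
  · exfalso
    have hAB : A ∩ B = A := Finset.eq_of_subset_of_card_le Finset.inter_subset_left (by omega)
    have : A ⊆ B := by rw [← hAB]; exact Finset.inter_subset_right
    exact hne (Finset.eq_of_subset_of_card_le this (by omega))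

lemma link_deg {V : Finset ℕ} {K : Finset (Finset ℕ)}
    (htri : ∀ A ∈ K, A.card = 3 ∧ A ⊆ V)
    (hedge : ∀ e : Finset ℕ, e.card = 2 → (∃ A ∈ K, e ⊆ A) →
      (K.filter fun A => e ⊆ A).card = 2)
    {v : ℕ} {A : Finset ℕ} (hAv : A ∈ K.filter (fun B => v ∈ B)) :
    ((K.filter (fun B => v ∈ B)).filter (fun B => (A ∩ B).card = 2)).card = 2 := by
  obtain ⟨hA, hvA⟩ := Finset.mem_filter.mp hAv
  have hA3 : A.card = 3 := (htri A hA).1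
  have herase : (A.erase v).card = 2 := by
    rw [Finset.card_erase_of_mem hvA, hA3]
  obtain ⟨w₁, w₂, hw12, hev⟩ := Finset.card_eq_two.mp herase
  have hw₁ : w₁ ∈ A.erase v := by rw [hev]; simp
  have hw₂ : w₂ ∈ A.erase v := by rw [hev]; simp
  have hw₁v : w₁ ≠ v := (Finset.mem_erase.mp hw₁).1
  have hw₂v : w₂ ≠ v := (Finset.mem_erase.mp hw₂).1
  have hw₁A : w₁ ∈ A := (Finset.mem_erase.mp hw₁).2
  have hw₂A : w₂ ∈ A := (Finset.mem_erase.mp hw₂).2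
  have he₁ : ({v, w₁} : Finset ℕ) ⊆ A := by
    intro u hu; rcases Finset.mem_insert.mp hu with rfl | hu
    · exact hvA
    · rw [Finset.mem_singleton.mp hu]; exact hw₁A
  have he₂ : ({v, w₂} : Finset ℕ) ⊆ A := by
    intro u hu; rcases Finset.mem_insert.mp hu with rfl | hu
    · exact hvA
    · rw [Finset.mem_singleton.mp hu]; exact hw₂A
  obtain ⟨B₁, hB₁K, hB₁A, hB₁e, hB₁uniq⟩ :=
    other_triangle hedge hA (pair_card_two (Ne.symm hw₁v)) he₁
  obtain ⟨B₂, hB₂K, hB₂A, hB₂e, hB₂uniq⟩ :=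
    other_triangle hedge hA (pair_card_two (Ne.symm hw₂v)) he₂
  have hB₁3 : B₁.card = 3 := (htri B₁ hB₁K).1
  have hB₂3 : B₂.card = 3 := (htri B₂ hB₂K).1
  have hvB₁ : v ∈ B₁ := hB₁e (by simp)
  have hvB₂ : v ∈ B₂ := hB₂e (by simp)
  have hw₁B₁ : w₁ ∈ B₁ := hB₁e (by simp)
  have hw₂B₂ : w₂ ∈ B₂ := hB₂e (by simp)
  have hB₁B₂ : B₁ ≠ B₂ := by
    rintro rfl
    -- then A ⊆ B₁ hence A = B₁, contradiction
    have hAsub : A ⊆ B₁ := by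
      intro u hu
      by_cases huv : u = v
      · rw [huv]; exact hvB₁
      · have : u ∈ A.erase v := Finset.mem_erase.mpr ⟨huv, hu⟩
        rw [hev] at this
        rcases Finset.mem_insert.mp this with rfl | h
        · exact hw₁B₁
        · rw [Finset.mem_singleton.mp h]; exact hw₂B₂
    exact hB₁A (Finset.eq_of_subset_of_card_le hAsub (by omega)).symm
  have hfeq : (K.filter (fun B => v ∈ B)).filter (fun B => (A ∩ B).card = 2)
      = {B₁, B₂} := by
    ext B
    simp only [Finset.mem_filter, Finset.mem_insert, Finset.mem_singleton]
    constructor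
    · rintro ⟨⟨hBK, hvB⟩, hcard⟩
      have hvAB : v ∈ A ∩ B := Finset.mem_inter.mpr ⟨hvA, hvB⟩
      obtain ⟨u, huv, hABu⟩ := two_of_card_two hcard hvAB
      have huA : u ∈ A := (Finset.mem_inter.mp (by rw [hABu]; simp : u ∈ A ∩ B)).1
      have huB : u ∈ B := (Finset.mem_inter.mp (by rw [hABu]; simp : u ∈ A ∩ B)).2
      have hBA : B ≠ A := by
        rintro rfl
        rw [Finset.inter_self] at hcard
        omega
      have huev : u ∈ A.erase v := Finset.mem_erase.mpr ⟨huv, huA⟩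
      rw [hev] at huev
      rcases Finset.mem_insert.mp huev with rfl | h
      · -- u = w₁
        have hsub : ({v, u} : Finset ℕ) ⊆ B := by
          intro p hp; rcases Finset.mem_insert.mp hp with rfl | hp
          · exact hvB
          · rw [Finset.mem_singleton.mp hp]; exact huB
        rcases hB₁uniq B hBK hsub with h | h
        · exact absurd h hBA
        · exact Or.inl h
      · rw [Finset.mem_singleton.mp h] at huB
        have hsub : ({v, w₂} : Finset ℕ) ⊆ B := by
          intro p hp; rcases Finset.mem_insert.mp hp with rfl | hp
          · exact hvB
          · rw [Finset.mem_singleton.mp hp]; exact huB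
        rcases hB₂uniq B hBK hsub with h | h
        · exact absurd h hBA
        · exact Or.inr h
    · rintro (rfl | rfl)
      · exact ⟨⟨hB₁K, hvB₁⟩, inter_card_two hA3 hB₁3 (Ne.symm hB₁A) hvA hvB₁ hw₁A hw₁B₁
          (Ne.symm hw₁v)⟩
      · exact ⟨⟨hB₂K, hvB₂⟩, inter_card_two hA3 hB₂3 (Ne.symm hB₂A) hvA hvB₂ hw₂A hw₂B₂
          (Ne.symm hw₂v)⟩
  rw [hfeq]
  rw [Finset.card_insert_of_notMem (by simpa using hB₁B₂), Finset.card_singleton]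

end Surface

section Surface2

lemma surface_link_erase {V : Finset ℕ} {K : Finset (Finset ℕ)}
    (htri : ∀ A ∈ K, A.card = 3 ∧ A ⊆ V)
    (hedge : ∀ e : Finset ℕ, e.card = 2 → (∃ A ∈ K, e ⊆ A) →
      (K.filter fun A => e ⊆ A).card = 2)
    (hlink : ∀ v ∈ V, ∀ A ∈ K, ∀ B ∈ K, v ∈ A → v ∈ B →
      Relation.ReflTransGen
        (fun A B => A ∈ K ∧ B ∈ K ∧ v ∈ A ∧ v ∈ B ∧ (A ∩ B).card = 2) A B)
    {A₀ : Finset ℕ} (hA₀ : A₀ ∈ K) {v : ℕ} (hv : v ∈ A₀) :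
    ∀ A, A ∈ K → A ≠ A₀ → v ∈ A → ∀ B, B ∈ K → B ≠ A₀ → v ∈ B →
      Relation.ReflTransGen
        (fun C D => C ∈ K ∧ D ∈ K ∧ C ≠ A₀ ∧ D ≠ A₀ ∧ v ∈ C ∧ v ∈ D ∧
          (C ∩ D).card = 2) A B := by
  intro A hA hA' hvA B hB hB' hvB
  have hvV : v ∈ V := (htri A₀ hA₀).2 hv
  set Kv := K.filter (fun B => v ∈ B) with hKv
  have hx : A₀ ∈ Kv := Finset.mem_filter.mpr ⟨hA₀, hv⟩
  have hconn' : ∀ a ∈ Kv, ∀ b ∈ Kv, Relation.ReflTransGen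
      (fun c d => c ∈ Kv ∧ d ∈ Kv ∧ (c ∩ d).card = 2) a b := by
    intro a ha b hb
    obtain ⟨haK, hva⟩ := Finset.mem_filter.mp ha
    obtain ⟨hbK, hvb⟩ := Finset.mem_filter.mp hb
    refine Relation.ReflTransGen.mono ?_ _ _ (hlink v hvV a haK b hbK hva hvb)
    rintro c d ⟨h1, h2, h3, h4, h5⟩
    exact ⟨Finset.mem_filter.mpr ⟨h1, h3⟩, Finset.mem_filter.mpr ⟨h2, h4⟩, h5⟩
  have hdeg : ∀ a ∈ Kv, (Kv.filter (fun b => (a ∩ b).card = 2)).card = 2 :=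
    fun a ha => link_deg htri hedge ha
  have hsym : ∀ a ∈ Kv, ∀ b ∈ Kv, (a ∩ b).card = 2 → (b ∩ a).card = 2 := by
    intro a _ b _ h; rwa [Finset.inter_comm]
  have hirr : ∀ a ∈ Kv, ¬ (a ∩ a).card = 2 := by
    intro a ha h
    rw [Finset.inter_self] at h
    have := (htri a (Finset.mem_filter.mp ha).1).1
    omega
  have hce := conn_erase hsym hirr hdeg hconn' hx A
    (Finset.mem_erase.mpr ⟨hA', Finset.mem_filter.mpr ⟨hA, hvA⟩⟩) B
    (Finset.mem_erase.mpr ⟨hB', Finset.mem_filter.mpr ⟨hB, hvB⟩⟩)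
  refine Relation.ReflTransGen.mono ?_ _ _ hce
  rintro c d ⟨h1, h2, h3⟩
  obtain ⟨hc1, hc2⟩ := Finset.mem_erase.mp h1
  obtain ⟨hd1, hd2⟩ := Finset.mem_erase.mp h2
  obtain ⟨hcK, hvc⟩ := Finset.mem_filter.mp hc2
  obtain ⟨hdK, hvd⟩ := Finset.mem_filter.mp hd2
  exact ⟨hcK, hdK, hc1, hd1, hvc, hvd, h3⟩

lemma surface_erase_conn {V : Finset ℕ} {K : Finset (Finset ℕ)}
    (htri : ∀ A ∈ K, A.card = 3 ∧ A ⊆ V)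
    (hedge : ∀ e : Finset ℕ, e.card = 2 → (∃ A ∈ K, e ⊆ A) →
      (K.filter fun A => e ⊆ A).card = 2)
    (hlink : ∀ v ∈ V, ∀ A ∈ K, ∀ B ∈ K, v ∈ A → v ∈ B →
      Relation.ReflTransGen
        (fun A B => A ∈ K ∧ B ∈ K ∧ v ∈ A ∧ v ∈ B ∧ (A ∩ B).card = 2) A B)
    (hconn : ∀ A ∈ K, ∀ B ∈ K, Relation.ReflTransGen
      (fun A B => A ∈ K ∧ B ∈ K ∧ (A ∩ B).card = 2) A B)
    {A₀ : Finset ℕ} (hA₀ : A₀ ∈ K) :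
    ∀ A ∈ K.erase A₀, ∀ B ∈ K.erase A₀,
      Relation.ReflTransGen
        (fun C D => C ∈ K.erase A₀ ∧ D ∈ K.erase A₀ ∧ (C ∩ D).card = 2) A B := by
  set R' := fun C D => C ∈ K.erase A₀ ∧ D ∈ K.erase A₀ ∧ (C ∩ D).card = 2 with hR'
  have hlink' : ∀ v, v ∈ A₀ → ∀ A, A ∈ K.erase A₀ → v ∈ A →
      ∀ B, B ∈ K.erase A₀ → v ∈ B → Relation.ReflTransGen R' A B := by
    intro v hv A hA hvA B hB hvB
    obtain ⟨hA1, hA2⟩ := Finset.mem_erase.mp hA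
    obtain ⟨hB1, hB2⟩ := Finset.mem_erase.mp hB
    refine Relation.ReflTransGen.mono ?_ _ _
      (surface_link_erase htri hedge hlink hA₀ hv A hA2 hA1 hvA B hB2 hB1 hvB)
    rintro c d ⟨h1, h2, h3, h4, _, _, h7⟩
    exact ⟨Finset.mem_erase.mpr ⟨h3, h1⟩, Finset.mem_erase.mpr ⟨h4, h2⟩, h7⟩
  have hsplice : ∀ A, A ∈ K.erase A₀ → (A ∩ A₀).card = 2 →
      ∀ B, B ∈ K.erase A₀ → (B ∩ A₀).card = 2 → Relation.ReflTransGen R' A B := by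
    intro A hA hA2 B hB hB2
    have hAne : (A ∩ A₀).Nonempty := by rw [← Finset.card_pos]; omega
    have hBne : (B ∩ A₀).Nonempty := by rw [← Finset.card_pos]; omega
    obtain ⟨p, hp⟩ := hAne
    obtain ⟨r, hr⟩ := hBne
    obtain ⟨hpA, hpA₀⟩ := Finset.mem_inter.mp hp
    obtain ⟨hrB, hrA₀⟩ := Finset.mem_inter.mp hr
    by_cases hpr : p = r
    · subst hpr
      exact hlink' p hpA₀ A hA hpA B hB hrB
    · obtain ⟨C, hCK, hCA₀, hCe, _⟩ := other_triangle hedge hA₀ (pair_card_two hpr)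
        (by intro u hu
            rcases Finset.mem_insert.mp hu with rfl | hu
            · exact hpA₀
            · rw [Finset.mem_singleton.mp hu]; exact hrA₀)
      have hC : C ∈ K.erase A₀ := Finset.mem_erase.mpr ⟨hCA₀, hCK⟩
      have hpC : p ∈ C := hCe (by simp)
      have hrC : r ∈ C := hCe (by simp)
      exact (hlink' p hpA₀ A hA hpA C hC hpC).trans (hlink' r hrA₀ C hC hrC B hB hrB)
  intro A hA B hB
  obtain ⟨hA1, hA2⟩ := Finset.mem_erase.mp hA
  obtain ⟨hB1, hB2⟩ := Finset.mem_erase.mp hB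
  have hmain : ∀ c,
      Relation.ReflTransGen (fun C D => C ∈ K ∧ D ∈ K ∧ (C ∩ D).card = 2) A c →
      (c ≠ A₀ → Relation.ReflTransGen R' A c) ∧
      (c = A₀ → ∃ e, e ∈ K.erase A₀ ∧ (e ∩ A₀).card = 2 ∧
        Relation.ReflTransGen R' A e) := by
    intro c hc
    induction hc with
    | refl => exact ⟨fun _ => Relation.ReflTransGen.refl, fun h => absurd h hA1⟩
    | @tail p q hp hstep ih =>
      obtain ⟨hpK, hqK, hcard⟩ := hstep
      constructor
      · intro hq0
        by_cases hp0 : p = A₀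
        · obtain ⟨e, he, hecard, hpe⟩ := ih.2 hp0
          refine hpe.trans (hsplice e he hecard q (Finset.mem_erase.mpr ⟨hq0, hqK⟩) ?_)
          rw [Finset.inter_comm]
          rwa [hp0] at hcard
        · exact (ih.1 hp0).tail
            ⟨Finset.mem_erase.mpr ⟨hp0, hpK⟩, Finset.mem_erase.mpr ⟨hq0, hqK⟩, hcard⟩
      · intro hq0
        rw [hq0] at hcard
        by_cases hp0 : p = A₀
        · rw [hp0, Finset.inter_self] at hcard
          have := (htri A₀ hA₀).1
          omega
        · exact ⟨p, Finset.mem_erase.mpr ⟨hp0, hpK⟩, hcard, ih.1 hp0⟩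
  exact (hmain B (hconn A hA2 B hB2)).1 hB1

end Surface2


/-- Connected sum of two combinatorial surfaces along triangles `T₁`, `T₂`, with the
vertices of `T₂` identified with those of `T₁` via the bijection `φ`: the result is a
combinatorial closed orientable surface of genus `gS + gT` with `|VS| + |VT| - 3`
vertices, and if `S \ {T₁}` admits no embedding into ℝ³, neither does the connected
sum. -/
theorem connected_sum (VS VT : Finset ℕ) (S T : Finset (Finset ℕ)) (gS gT : ℕ)
    (hS : IsCombSurface VS S gS) (hT : IsCombSurface VT T gT)
    (hVdisj : Disjoint VS VT)
    (T₁ : Finset ℕ) (hT₁ : T₁ ∈ S) (T₂ : Finset ℕ) (hT₂ : T₂ ∈ T)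
    (φ : ℕ → ℕ) (hφ : Set.BijOn φ (T₂ : Set ℕ) (T₁ : Set ℕ))
    (hφid : ∀ x ∉ T₂, φ x = x)
    (X : Finset (Finset ℕ))
    (hX : X = (S.erase T₁) ∪ ((T.erase T₂).image (Finset.image φ))) :
    IsCombSurface (VS ∪ (VT \ T₂)) X (gS + gT) ∧
    (VS ∪ (VT \ T₂)).card = VS.card + VT.card - 3 ∧
    (¬ AdmitsEmbedding (S.erase T₁) → ¬ AdmitsEmbedding X) := by
  classical
  obtain ⟨hSne, hStri, hScov, hSedge, hSlink, hSconn, ⟨ωS, hωS1, hωS2⟩, hSeuler⟩ := hS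
  obtain ⟨hTne, hTtri, hTcov, hTedge, hTlink, hTconn, ⟨ωT0, hωT01, hωT02⟩, hTeuler⟩ := hT
  have hT₁3 : T₁.card = 3 := (hStri T₁ hT₁).1
  have hT₁V : T₁ ⊆ VS := (hStri T₁ hT₁).2
  have hT₂3 : T₂.card = 3 := (hTtri T₂ hT₂).1
  have hT₂V : T₂ ⊆ VT := (hTtri T₂ hT₂).2
  have hφT : ∀ x ∈ T₂, φ x ∈ T₁ := by
    intro x hx
    have := hφ.1 (by exact_mod_cast hx : x ∈ (T₂ : Set ℕ))
    exact_mod_cast this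
  have hφsurj : ∀ w ∈ T₁, ∃ x ∈ T₂, φ x = w := by
    intro w hw
    obtain ⟨x, hx, hxw⟩ := hφ.2.2 (by exact_mod_cast hw : w ∈ (T₁ : Set ℕ))
    exact ⟨x, by exact_mod_cast hx, hxw⟩
  have hdisj' : ∀ x, x ∈ VS → x ∈ VT → False :=
    fun x h1 h2 => (Finset.disjoint_left.mp hVdisj) h1 h2
  have hinj : ∀ x ∈ VT, ∀ y ∈ VT, φ x = φ y → x = y := by
    intro x hx y hy h
    by_cases hxT : x ∈ T₂ <;> by_cases hyT : y ∈ T₂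
    · exact hφ.2.1 (by exact_mod_cast hxT) (by exact_mod_cast hyT) h
    · exfalso
      rw [hφid y hyT] at h
      exact hdisj' y (h ▸ hT₁V (hφT x hxT)) hy
    · exfalso
      rw [hφid x hxT] at h
      exact hdisj' x (h ▸ hT₁V (hφT y hyT)) hx
    · rwa [hφid x hxT, hφid y hyT] at h
  have hBVT : ∀ B ∈ T, B ⊆ VT := fun B hB => (hTtri B hB).2
  have hSVS : ∀ A ∈ S, A ⊆ VS := fun A hA => (hStri A hA).2
  have himg_card : ∀ B ∈ T, (B.image φ).card = 3 := by
    intro B hB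
    rw [Finset.card_image_of_injOn
      (fun x hx y hy h => hinj x (hBVT B hB (by exact_mod_cast hx)) y
        (hBVT B hB (by exact_mod_cast hy)) h)]
    exact (hTtri B hB).1
  have himg_sub : ∀ B ∈ T, B.image φ ⊆ VS ∪ (VT \ T₂) := by
    intro B hB x hx
    obtain ⟨b, hb, rfl⟩ := Finset.mem_image.mp hx
    by_cases hbT : b ∈ T₂
    · exact Finset.mem_union_left _ (hT₁V (hφT b hbT))
    · rw [hφid b hbT]
      exact Finset.mem_union_right _ (Finset.mem_sdiff.mpr ⟨hBVT B hB hb, hbT⟩)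
  have himg_interVS : ∀ B ∈ T, ∀ x ∈ B.image φ, x ∈ VS → x ∈ T₁ := by
    intro B hB x hx hxVS
    obtain ⟨b, hb, rfl⟩ := Finset.mem_image.mp hx
    by_cases hbT : b ∈ T₂
    · exact hφT b hbT
    · exfalso
      rw [hφid b hbT] at hxVS
      exact hdisj' b hxVS (hBVT B hB hb)
  have himg_exv : ∀ B ∈ T.erase T₂, ∃ u, u ∈ B ∧ u ∈ B.image φ ∧ u ∈ VT \ T₂ := by
    intro B hB
    obtain ⟨hBne, hBT⟩ := Finset.mem_erase.mp hB
    have hnsub : ¬ B ⊆ T₂ := by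
      intro hsub
      exact hBne (Finset.eq_of_subset_of_card_le hsub
        (by rw [hT₂3, (hTtri B hBT).1]))
    obtain ⟨b, hbB, hbT₂⟩ := Finset.not_subset.mp hnsub
    refine ⟨b, hbB, ?_, Finset.mem_sdiff.mpr ⟨hBVT B hBT hbB, hbT₂⟩⟩
    have : φ b = b := hφid b hbT₂
    exact Finset.mem_image.mpr ⟨b, hbB, this⟩
  have himg_notS : ∀ B ∈ T.erase T₂, ∀ C, C ⊆ VS → B.image φ ≠ C := by
    intro B hB C hC h
    obtain ⟨u, _, huimg, huVT⟩ := himg_exv B hB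
    rw [h] at huimg
    exact hdisj' u (hC huimg) (Finset.mem_sdiff.mp huVT).1
  have hpdisj : Disjoint (S.erase T₁) ((T.erase T₂).image (Finset.image φ)) := by
    rw [Finset.disjoint_right]
    intro C hC hC'
    obtain ⟨B, hB, rfl⟩ := Finset.mem_image.mp hC
    exact himg_notS B hB _ (hSVS _ (Finset.mem_of_mem_erase hC')) rfl
  have hXmem : ∀ C, C ∈ X ↔ (C ∈ S.erase T₁ ∨ ∃ B ∈ T.erase T₂, B.image φ = C) := by
    intro C
    rw [hX]
    simp [Finset.mem_union, Finset.mem_image]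
  have hIinj : ∀ B, B ⊆ VT → ∀ B', B' ⊆ VT → B.image φ = B'.image φ → B = B' := by
    intro B hB B' hB' h
    apply Finset.Subset.antisymm <;> intro b hb
    · have : φ b ∈ B'.image φ := h ▸ Finset.mem_image_of_mem φ hb
      obtain ⟨b', hb', hbb⟩ := Finset.mem_image.mp this
      rwa [← hinj b' (hB' hb') b (hB hb) hbb]
    · have : φ b ∈ B.image φ := h ▸ Finset.mem_image_of_mem φ hb
      obtain ⟨b', hb', hbb⟩ := Finset.mem_image.mp this
      rwa [← hinj b' (hB hb') b (hB' hb) hbb]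
  have hXtri : ∀ C ∈ X, C.card = 3 ∧ C ⊆ VS ∪ (VT \ T₂) := by
    intro C hC
    rcases (hXmem C).mp hC with h | ⟨B, hB, rfl⟩
    · have hCS := Finset.mem_of_mem_erase h
      refine ⟨(hStri C hCS).1, fun x hx => Finset.mem_union_left _ (hSVS C hCS hx)⟩
    · exact ⟨himg_card B (Finset.mem_of_mem_erase hB), himg_sub B (Finset.mem_of_mem_erase hB)⟩
  have hpreimg : ∀ e, e ⊆ T₁ → (T₂.filter (fun x => φ x ∈ e)).image φ = e := by
    intro e he
    apply Finset.Subset.antisymm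
    · intro w hw
      obtain ⟨x, hx, rfl⟩ := Finset.mem_image.mp hw
      exact (Finset.mem_filter.mp hx).2
    · intro w hw
      obtain ⟨x, hx, rfl⟩ := hφsurj w (he hw)
      exact Finset.mem_image.mpr ⟨x, Finset.mem_filter.mpr ⟨hx, hw⟩, rfl⟩
  have hprecard : ∀ e, e ⊆ T₁ → (T₂.filter (fun x => φ x ∈ e)).card = e.card := by
    intro e he
    conv_rhs => rw [← hpreimg e he]
    rw [Finset.card_image_of_injOn]
    intro x hx y hy h
    exact hinj x (hT₂V (Finset.mem_filter.mp (by exact_mod_cast hx)).1) y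
      (hT₂V (Finset.mem_filter.mp (by exact_mod_cast hy)).1) h
  have hsub_iff : ∀ e' B : Finset ℕ, e' ⊆ VT → B ⊆ VT →
      (e'.image φ ⊆ B.image φ ↔ e' ⊆ B) := by
    intro e' B he' hB
    constructor
    · intro h x hx
      obtain ⟨b, hb, hbx⟩ := Finset.mem_image.mp (h (Finset.mem_image_of_mem φ hx))
      rwa [← hinj b (hB hb) x (he' hx) hbx]
    · exact fun h => Finset.image_subset_image h
  have he_img : ∀ e B : Finset ℕ, B ⊆ VT → e ⊆ B.image φ →
      (B.filter (fun x => φ x ∈ e)).image φ = e := by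
    intro e B hB he
    apply Finset.Subset.antisymm
    · intro w hw
      obtain ⟨x, hx, rfl⟩ := Finset.mem_image.mp hw
      exact (Finset.mem_filter.mp hx).2
    · intro w hw
      obtain ⟨b, hb, rfl⟩ := Finset.mem_image.mp (he hw)
      exact Finset.mem_image.mpr ⟨b, Finset.mem_filter.mpr ⟨hb, hw⟩, rfl⟩
  have hbridge : ∀ v v' w, v ∈ T₁ → v' ∈ T₂ → φ v' = v → w ∈ T₁ → v ≠ w →
      ∃ A₀ B₀, A₀ ∈ S ∧ A₀ ≠ T₁ ∧ v ∈ A₀ ∧ B₀ ∈ T ∧ B₀ ≠ T₂ ∧ v' ∈ B₀ ∧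
        (A₀ ∩ B₀.image φ).card = 2 := by
    intro v v' w hv hv' hφv' hw hvw
    obtain ⟨w', hw', hφw'⟩ := hφsurj w hw
    have hvw' : v' ≠ w' := by
      rintro rfl
      exact hvw (hφv' ▸ hφw' ▸ rfl)
    have hevsub : ({v, w} : Finset ℕ) ⊆ T₁ := by
      intro u hu
      rcases Finset.mem_insert.mp hu with rfl | hu
      · exact hv
      · rw [Finset.mem_singleton.mp hu]; exact hw
    have hev'sub : ({v', w'} : Finset ℕ) ⊆ T₂ := by
      intro u hu
      rcases Finset.mem_insert.mp hu with rfl | hu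
      · exact hv'
      · rw [Finset.mem_singleton.mp hu]; exact hw'
    obtain ⟨A₀, hA₀S, hA₀T₁, hA₀e, _⟩ := other_triangle hSedge hT₁ (pair_card_two hvw) hevsub
    obtain ⟨B₀, hB₀T, hB₀T₂, hB₀e, _⟩ := other_triangle hTedge hT₂ (pair_card_two hvw') hev'sub
    have hB₀er : B₀ ∈ T.erase T₂ := Finset.mem_erase.mpr ⟨hB₀T₂, hB₀T⟩
    have hvA₀ : v ∈ A₀ := hA₀e (by simp)
    have hwA₀ : w ∈ A₀ := hA₀e (by simp)
    have hv'B₀ : v' ∈ B₀ := hB₀e (by simp)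
    have hw'B₀ : w' ∈ B₀ := hB₀e (by simp)
    have hvimg : v ∈ B₀.image φ := Finset.mem_image.mpr ⟨v', hv'B₀, hφv'⟩
    have hwimg : w ∈ B₀.image φ := Finset.mem_image.mpr ⟨w', hw'B₀, hφw'⟩
    refine ⟨A₀, B₀, hA₀S, hA₀T₁, hvA₀, hB₀T, hB₀T₂, hv'B₀, ?_⟩
    exact inter_card_two (hStri A₀ hA₀S).1 (himg_card B₀ hB₀T)
      (fun h => himg_notS B₀ hB₀er A₀ (hSVS A₀ hA₀S) h.symm)
      hvA₀ hvimg hwA₀ hwimg hvw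
  have himg_inter : ∀ A B : Finset ℕ, A ⊆ VT → B ⊆ VT →
      (A.image φ) ∩ (B.image φ) = (A ∩ B).image φ := by
    intro A B hA hB
    refine (Finset.image_inter_of_injOn A B ?_).symm
    intro x hx y hy h
    rcases Finset.mem_union.mp (by exact_mod_cast hx) with h1 | h1
    · rcases Finset.mem_union.mp (by exact_mod_cast hy) with h2 | h2
      · exact hinj x (hA h1) y (hA h2) h
      · exact hinj x (hA h1) y (hB h2) h
    · rcases Finset.mem_union.mp (by exact_mod_cast hy) with h2 | h2
      · exact hinj x (hB h1) y (hA h2) h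
      · exact hinj x (hB h1) y (hB h2) h
  have hinter2 : ∀ c d : Finset ℕ, c ∈ T → d ∈ T → (c ∩ d).card = 2 →
      ((c.image φ) ∩ (d.image φ)).card = 2 := by
    intro c d hc hd h
    rw [himg_inter c d (hBVT c hc) (hBVT d hd), Finset.card_image_of_injOn
      (fun x hx y hy hxy => hinj x (hBVT c hc (Finset.mem_inter.mp (by exact_mod_cast hx)).1)
        y (hBVT c hc (Finset.mem_inter.mp (by exact_mod_cast hy)).1) hxy)]
    exact h
  have hpick : ∀ v ∈ T₁, ∃ w ∈ T₁, w ≠ v := by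
    intro v hv
    have h1 : (T₁.erase v).Nonempty := by
      rw [← Finset.card_pos, Finset.card_erase_of_mem hv, hT₁3]
      omega
    obtain ⟨w, hw⟩ := h1
    exact ⟨w, Finset.mem_of_mem_erase hw, (Finset.mem_erase.mp hw).1⟩
  have hT₁2elt : ∃ v w, v ∈ T₁ ∧ w ∈ T₁ ∧ v ≠ w := by
    have hne : T₁.Nonempty := by rw [← Finset.card_pos, hT₁3]; omega
    obtain ⟨v, hv⟩ := hne
    obtain ⟨w, hw, hwv⟩ := hpick v hv
    exact ⟨v, w, hv, hw, hwv.symm⟩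
  have hXne : X.Nonempty := by
    obtain ⟨v, w, hv, hw, hvw⟩ := hT₁2elt
    obtain ⟨v', hv', hφv'⟩ := hφsurj v hv
    obtain ⟨A₀, B₀, hA₀S, hA₀T₁, _⟩ := hbridge v v' w hv hv' hφv' hw hvw
    exact ⟨A₀, (hXmem A₀).mpr (Or.inl (Finset.mem_erase.mpr ⟨hA₀T₁, hA₀S⟩))⟩
  -- covering
  have hXcov : ∀ v ∈ VS ∪ (VT \ T₂), ∃ C ∈ X, v ∈ C := by
    intro v hv
    rcases Finset.mem_union.mp hv with hvVS | hvVT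
    · obtain ⟨A, hA, hvA⟩ := hScov v hvVS
      by_cases hAT₁ : A = T₁
      · subst hAT₁
        obtain ⟨w, hwT₁, hwv⟩ := hpick v hvA
        have hsub : ({v, w} : Finset ℕ) ⊆ A := by
          intro u hu
          rcases Finset.mem_insert.mp hu with rfl | hu
          · exact hvA
          · rw [Finset.mem_singleton.mp hu]; exact hwT₁
        obtain ⟨B, hBS, hBT₁, hBe, _⟩ :=
          other_triangle hSedge hT₁ (pair_card_two (Ne.symm hwv)) hsub
        exact ⟨B, (hXmem B).mpr (Or.inl (Finset.mem_erase.mpr ⟨hBT₁, hBS⟩)),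
          hBe (by simp)⟩
      · exact ⟨A, (hXmem A).mpr (Or.inl (Finset.mem_erase.mpr ⟨hAT₁, hA⟩)), hvA⟩
    · obtain ⟨hvVT', hvT₂⟩ := Finset.mem_sdiff.mp hvVT
      obtain ⟨B, hB, hvB⟩ := hTcov v hvVT'
      have hBT₂ : B ≠ T₂ := fun h => hvT₂ (h ▸ hvB)
      refine ⟨B.image φ, (hXmem _).mpr (Or.inr ⟨B, Finset.mem_erase.mpr ⟨hBT₂, hB⟩, rfl⟩), ?_⟩
      exact Finset.mem_image.mpr ⟨v, hvB, hφid v hvT₂⟩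
  have hIinjE : ∀ s : Finset (Finset ℕ), (∀ B ∈ s, B ⊆ VT) →
      Set.InjOn (Finset.image φ) (s : Set (Finset ℕ)) := by
    intro s hs B hB B' hB' h
    exact hIinj B (hs B (by exact_mod_cast hB)) B' (hs B' (by exact_mod_cast hB')) h
  have hsplitf : ∀ e : Finset ℕ, (X.filter (fun C => e ⊆ C)).card
      = ((S.erase T₁).filter (fun C => e ⊆ C)).card
        + ((T.erase T₂).filter (fun B => e ⊆ B.image φ)).card := by
    intro e
    rw [hX, Finset.filter_union,
      Finset.card_union_of_disjoint (Finset.disjoint_filter_filter hpdisj)]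
    congr 1
    rw [Finset.filter_image]
    exact Finset.card_image_of_injOn (hIinjE _ (fun B hB =>
      hBVT B (Finset.mem_of_mem_erase (Finset.mem_of_mem_filter B hB))))
  -- edge condition
  have hXedge : ∀ e : Finset ℕ, e.card = 2 → (∃ C ∈ X, e ⊆ C) →
      (X.filter fun C => e ⊆ C).card = 2 := by
    intro e hecard hex
    rw [hsplitf e]
    by_cases heVS : e ⊆ VS
    · by_cases heT₁ : e ⊆ T₁
      · have hS1 : ((S.erase T₁).filter (fun C => e ⊆ C)).card = 1 := by
          rw [Finset.filter_erase, Finset.card_erase_of_mem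
            (Finset.mem_filter.mpr ⟨hT₁, heT₁⟩), hSedge e hecard ⟨T₁, hT₁, heT₁⟩]
        set e' := T₂.filter (fun x => φ x ∈ e) with he'd
        have he'sub : e' ⊆ T₂ := Finset.filter_subset _ _
        have he'img : e'.image φ = e := hpreimg e heT₁
        have he'card : e'.card = 2 := by rw [hprecard e heT₁, hecard]
        have hiff : ∀ B ∈ T, (e ⊆ B.image φ ↔ e' ⊆ B) := by
          intro B hB
          rw [← he'img]
          exact hsub_iff e' B (fun x hx => hT₂V (he'sub hx)) (hBVT B hB)
        have hfeq : (T.erase T₂).filter (fun B => e ⊆ B.image φ)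
            = (T.filter (fun B => e' ⊆ B)).erase T₂ := by
          ext B
          simp only [Finset.mem_filter, Finset.mem_erase]
          constructor
          · rintro ⟨⟨hB1, hB2⟩, h3⟩
            exact ⟨hB1, hB2, (hiff B hB2).mp h3⟩
          · rintro ⟨hB1, hB2, h3⟩
            exact ⟨⟨hB1, hB2⟩, (hiff B hB2).mpr h3⟩
        have hT1 : ((T.filter (fun B => e' ⊆ B)).erase T₂).card = 1 := by
          rw [Finset.card_erase_of_mem (Finset.mem_filter.mpr ⟨hT₂, he'sub⟩),
            hTedge e' he'card ⟨T₂, hT₂, he'sub⟩]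
        rw [hS1, hfeq, hT1]
      · have hT0 : ((T.erase T₂).filter (fun B => e ⊆ B.image φ)).card = 0 := by
          rw [Finset.card_eq_zero, Finset.filter_eq_empty_iff]
          intro B hB h
          apply heT₁
          intro x hx
          exact himg_interVS B (Finset.mem_of_mem_erase hB) x (h hx) (heVS hx)
        have hwit : ∃ A ∈ S, e ⊆ A := by
          obtain ⟨C, hC, heC⟩ := hex
          rcases (hXmem C).mp hC with h | ⟨B, hB, rfl⟩
          · exact ⟨C, Finset.mem_of_mem_erase h, heC⟩
          · exact absurd (fun x hx => himg_interVS B (Finset.mem_of_mem_erase hB) x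
              (heC hx) (heVS hx)) heT₁
        have hS2 : ((S.erase T₁).filter (fun C => e ⊆ C)).card = 2 := by
          rw [Finset.filter_erase, Finset.erase_eq_of_notMem
            (fun h => heT₁ (Finset.mem_filter.mp h).2), hSedge e hecard hwit]
        rw [hS2, hT0]
    · have hS0 : ((S.erase T₁).filter (fun C => e ⊆ C)).card = 0 := by
        rw [Finset.card_eq_zero, Finset.filter_eq_empty_iff]
        intro A hA h
        exact heVS (fun x hx => hSVS A (Finset.mem_of_mem_erase hA) (h hx))
      obtain ⟨C, hC, heC⟩ := hex
      rcases (hXmem C).mp hC with h | ⟨B, hB, rfl⟩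
      · exact absurd (fun x hx => hSVS C (Finset.mem_of_mem_erase h) (heC hx)) heVS
      · set e' := B.filter (fun x => φ x ∈ e) with he'd
        have hBT : B ∈ T := Finset.mem_of_mem_erase hB
        have he'B : e' ⊆ B := Finset.filter_subset _ _
        have he'VT : e' ⊆ VT := fun x hx => hBVT B hBT (he'B hx)
        have he'img : e'.image φ = e := he_img e B (hBVT B hBT) heC
        have he'card : e'.card = 2 := by
          have hci := Finset.card_image_of_injOn (f := φ) (s := e')
            (fun x hx y hy hxy => hinj x (he'VT (by exact_mod_cast hx)) y
              (he'VT (by exact_mod_cast hy)) hxy)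
          rw [he'img] at hci
          omega
        have he'T₂ : ¬ e' ⊆ T₂ := by
          intro h
          apply heVS
          intro x hx
          rw [← he'img] at hx
          obtain ⟨y, hy, rfl⟩ := Finset.mem_image.mp hx
          exact hT₁V (hφT y (h hy))
        have hiff : ∀ B' ∈ T, (e ⊆ B'.image φ ↔ e' ⊆ B') := by
          intro B' hB'
          rw [← he'img]
          exact hsub_iff e' B' he'VT (hBVT B' hB')
        have hfeq : (T.erase T₂).filter (fun B' => e ⊆ B'.image φ)
            = (T.filter (fun B' => e' ⊆ B')).erase T₂ := by
          ext B'
          simp only [Finset.mem_filter, Finset.mem_erase]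
          constructor
          · rintro ⟨⟨hB1, hB2⟩, h3⟩
            exact ⟨hB1, hB2, (hiff B' hB2).mp h3⟩
          · rintro ⟨hB1, hB2, h3⟩
            exact ⟨⟨hB1, hB2⟩, (hiff B' hB2).mpr h3⟩
        have hT2c : ((T.filter (fun B' => e' ⊆ B')).erase T₂).card = 2 := by
          rw [Finset.erase_eq_of_notMem
            (fun h => he'T₂ (Finset.mem_filter.mp h).2),
            hTedge e' he'card ⟨B, hBT, he'B⟩]
        rw [hS0, hfeq, hT2c]
  -- link condition
  have hXlink : ∀ v ∈ VS ∪ (VT \ T₂), ∀ C₁ ∈ X, ∀ C₂ ∈ X, v ∈ C₁ → v ∈ C₂ →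
      Relation.ReflTransGen
        (fun A B => A ∈ X ∧ B ∈ X ∧ v ∈ A ∧ v ∈ B ∧ (A ∩ B).card = 2) C₁ C₂ := by
    intro v hv C₁ hC₁ C₂ hC₂ hvC₁ hvC₂
    set RX : Finset ℕ → Finset ℕ → Prop :=
      fun A B => A ∈ X ∧ B ∈ X ∧ v ∈ A ∧ v ∈ B ∧ (A ∩ B).card = 2 with hRXd
    have hsymRX : Symmetric RX := by
      rintro A B ⟨h1, h2, h3, h4, h5⟩
      exact ⟨h2, h1, h4, h3, by rwa [Finset.inter_comm]⟩
    by_cases hvVS : v ∈ VS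
    · by_cases hvT₁ : v ∈ T₁
      · obtain ⟨v', hv'T₂, hφv'⟩ := hφsurj v hvT₁
        have hclass : ∀ C, C ∈ X → v ∈ C →
            (C ∈ S.erase T₁ ∧ v ∈ C) ∨ (∃ B, B ∈ T.erase T₂ ∧ B.image φ = C ∧ v' ∈ B) := by
          intro C hC hvC
          rcases (hXmem C).mp hC with h | ⟨B, hB, rfl⟩
          · exact Or.inl ⟨h, hvC⟩
          · right
            refine ⟨B, hB, rfl, ?_⟩
            obtain ⟨b, hbB, hbv⟩ := Finset.mem_image.mp hvC
            have hbT₂ : b ∈ T₂ := by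
              by_contra hbT₂
              rw [hφid b hbT₂] at hbv
              exact hdisj' v hvVS (hbv ▸ hBVT B (Finset.mem_of_mem_erase hB) hbB)
            have hbv' : b = v' := hinj b (hT₂V hbT₂) v' (hT₂V hv'T₂) (by rw [hbv, hφv'])
            rwa [← hbv']
        have hSS : ∀ A, A ∈ S.erase T₁ → v ∈ A → ∀ B, B ∈ S.erase T₁ → v ∈ B →
            Relation.ReflTransGen RX A B := by
          intro A hA hvA B hB hvB
          obtain ⟨hA1, hA2⟩ := Finset.mem_erase.mp hA
          obtain ⟨hB1, hB2⟩ := Finset.mem_erase.mp hB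
          refine Relation.ReflTransGen.mono ?_ _ _
            (surface_link_erase hStri hSedge hSlink hT₁ hvT₁ A hA2 hA1 hvA B hB2 hB1 hvB)
          rintro c d ⟨h1, h2, h3, h4, h5, h6, h7⟩
          exact ⟨(hXmem c).mpr (Or.inl (Finset.mem_erase.mpr ⟨h3, h1⟩)),
            (hXmem d).mpr (Or.inl (Finset.mem_erase.mpr ⟨h4, h2⟩)), h5, h6, h7⟩
        have hTT : ∀ A, A ∈ T.erase T₂ → v' ∈ A → ∀ B, B ∈ T.erase T₂ → v' ∈ B →
            Relation.ReflTransGen RX (A.image φ) (B.image φ) := by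
          intro A hA hv'A B hB hv'B
          obtain ⟨hA1, hA2⟩ := Finset.mem_erase.mp hA
          obtain ⟨hB1, hB2⟩ := Finset.mem_erase.mp hB
          refine Relation.ReflTransGen.lift (Finset.image φ) ?_ _ _
            (surface_link_erase hTtri hTedge hTlink hT₂ hv'T₂ A hA2 hA1 hv'A B hB2 hB1 hv'B)
          rintro c d ⟨h1, h2, h3, h4, h5, h6, h7⟩
          exact ⟨(hXmem _).mpr (Or.inr ⟨c, Finset.mem_erase.mpr ⟨h3, h1⟩, rfl⟩),
            (hXmem _).mpr (Or.inr ⟨d, Finset.mem_erase.mpr ⟨h4, h2⟩, rfl⟩),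
            Finset.mem_image.mpr ⟨v', h5, hφv'⟩,
            Finset.mem_image.mpr ⟨v', h6, hφv'⟩, hinter2 c d h1 h2 h7⟩
        obtain ⟨w, hwT₁, hwv⟩ := hpick v hvT₁
        obtain ⟨A₀, B₀, hA₀S, hA₀T₁, hvA₀, hB₀T, hB₀T₂, hv'B₀, hcard₀⟩ :=
          hbridge v v' w hvT₁ hv'T₂ hφv' hwT₁ (Ne.symm hwv)
        have hA₀X : A₀ ∈ S.erase T₁ := Finset.mem_erase.mpr ⟨hA₀T₁, hA₀S⟩
        have hB₀er : B₀ ∈ T.erase T₂ := Finset.mem_erase.mpr ⟨hB₀T₂, hB₀T⟩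
        have hstep : RX A₀ (B₀.image φ) :=
          ⟨(hXmem _).mpr (Or.inl hA₀X), (hXmem _).mpr (Or.inr ⟨B₀, hB₀er, rfl⟩),
            hvA₀, Finset.mem_image.mpr ⟨v', hv'B₀, hφv'⟩, hcard₀⟩
        rcases hclass C₁ hC₁ hvC₁ with ⟨h1, h1v⟩ | ⟨B₁, hB₁, hrfl1, hv'B₁⟩ <;>
          rcases hclass C₂ hC₂ hvC₂ with ⟨h2, h2v⟩ | ⟨B₂, hB₂, hrfl2, hv'B₂⟩
        · exact hSS C₁ h1 h1v C₂ h2 h2v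
        · exact ((hSS C₁ h1 h1v A₀ hA₀X hvA₀).tail hstep).trans
            (hrfl2 ▸ hTT B₀ hB₀er hv'B₀ B₂ hB₂ hv'B₂)
        · exact (Std.Symm.symm (self := @Relation.ReflTransGen.stdSymm _ _ ⟨fun _ _ h => hsymRX h⟩) _ _)
            (((hSS C₂ h2 h2v A₀ hA₀X hvA₀).tail hstep).trans
              (hrfl1 ▸ hTT B₀ hB₀er hv'B₀ B₁ hB₁ hv'B₁))
        · exact hrfl1 ▸ hrfl2 ▸ hTT B₁ hB₁ hv'B₁ B₂ hB₂ hv'B₂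
      · have hget : ∀ C, C ∈ X → v ∈ C → C ∈ S ∧ C ≠ T₁ := by
          intro C hC hvC
          rcases (hXmem C).mp hC with h | ⟨B, hB, rfl⟩
          · exact ⟨Finset.mem_of_mem_erase h, (Finset.mem_erase.mp h).1⟩
          · exact absurd (himg_interVS B (Finset.mem_of_mem_erase hB) v hvC hvVS) hvT₁
        obtain ⟨h1S, _⟩ := hget C₁ hC₁ hvC₁
        obtain ⟨h2S, _⟩ := hget C₂ hC₂ hvC₂
        refine Relation.ReflTransGen.mono ?_ _ _ (hSlink v hvVS C₁ h1S C₂ h2S hvC₁ hvC₂)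
        rintro c d ⟨hc, hd, h3, h4, h5⟩
        have hcT₁ : c ≠ T₁ := fun h => hvT₁ (h ▸ h3)
        have hdT₁ : d ≠ T₁ := fun h => hvT₁ (h ▸ h4)
        exact ⟨(hXmem c).mpr (Or.inl (Finset.mem_erase.mpr ⟨hcT₁, hc⟩)),
          (hXmem d).mpr (Or.inl (Finset.mem_erase.mpr ⟨hdT₁, hd⟩)), h3, h4, h5⟩
    · have hvMem : v ∈ VT \ T₂ := by
        rcases Finset.mem_union.mp hv with h | h
        · exact absurd h hvVS
        · exact h
      obtain ⟨hvVT, hvT₂⟩ := Finset.mem_sdiff.mp hvMem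
      have hget : ∀ C, C ∈ X → v ∈ C → ∃ B, B ∈ T ∧ B ≠ T₂ ∧ B.image φ = C ∧ v ∈ B := by
        intro C hC hvC
        rcases (hXmem C).mp hC with h | ⟨B, hB, rfl⟩
        · exact absurd (hSVS C (Finset.mem_of_mem_erase h) hvC) hvVS
        · refine ⟨B, Finset.mem_of_mem_erase hB, (Finset.mem_erase.mp hB).1, rfl, ?_⟩
          obtain ⟨b, hbB, hbv⟩ := Finset.mem_image.mp hvC
          by_cases hbT₂ : b ∈ T₂
          · exact absurd (hbv ▸ hT₁V (hφT b hbT₂)) hvVS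
          · rwa [← hφid b hbT₂, hbv] at hbB
      obtain ⟨B₁, hB₁T, hB₁T₂, hrfl1, hvB₁⟩ := hget C₁ hC₁ hvC₁
      obtain ⟨B₂, hB₂T, hB₂T₂, hrfl2, hvB₂⟩ := hget C₂ hC₂ hvC₂
      rw [← hrfl1, ← hrfl2]
      refine Relation.ReflTransGen.lift (Finset.image φ) ?_ _ _
        (hTlink v hvVT B₁ hB₁T B₂ hB₂T hvB₁ hvB₂)
      rintro c d ⟨h1, h2, h3, h4, h5⟩
      have hcT₂ : c ≠ T₂ := fun h => hvT₂ (h ▸ h3)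
      have hdT₂ : d ≠ T₂ := fun h => hvT₂ (h ▸ h4)
      exact ⟨(hXmem _).mpr (Or.inr ⟨c, Finset.mem_erase.mpr ⟨hcT₂, h1⟩, rfl⟩),
        (hXmem _).mpr (Or.inr ⟨d, Finset.mem_erase.mpr ⟨hdT₂, h2⟩, rfl⟩),
        Finset.mem_image.mpr ⟨v, h3, hφid v hvT₂⟩,
        Finset.mem_image.mpr ⟨v, h4, hφid v hvT₂⟩, hinter2 c d h1 h2 h5⟩
  -- global connectivity
  have hXconn : ∀ C₁ ∈ X, ∀ C₂ ∈ X,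
      Relation.ReflTransGen (fun A B => A ∈ X ∧ B ∈ X ∧ (A ∩ B).card = 2) C₁ C₂ := by
    intro C₁ hC₁ C₂ hC₂
    set RG : Finset ℕ → Finset ℕ → Prop :=
      fun A B => A ∈ X ∧ B ∈ X ∧ (A ∩ B).card = 2 with hRGd
    have hsymRG : Symmetric RG := by
      rintro A B ⟨h1, h2, h3⟩
      exact ⟨h2, h1, by rwa [Finset.inter_comm]⟩
    have hSS : ∀ A, A ∈ S.erase T₁ → ∀ B, B ∈ S.erase T₁ →
        Relation.ReflTransGen RG A B := by
      intro A hA B hB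
      refine Relation.ReflTransGen.mono ?_ _ _
        (surface_erase_conn hStri hSedge hSlink hSconn hT₁ A hA B hB)
      rintro c d ⟨h1, h2, h3⟩
      exact ⟨(hXmem c).mpr (Or.inl h1), (hXmem d).mpr (Or.inl h2), h3⟩
    have hTT : ∀ A, A ∈ T.erase T₂ → ∀ B, B ∈ T.erase T₂ →
        Relation.ReflTransGen RG (A.image φ) (B.image φ) := by
      intro A hA B hB
      refine Relation.ReflTransGen.lift (Finset.image φ) ?_ _ _
        (surface_erase_conn hTtri hTedge hTlink hTconn hT₂ A hA B hB)
      rintro c d ⟨h1, h2, h3⟩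
      exact ⟨(hXmem _).mpr (Or.inr ⟨c, h1, rfl⟩), (hXmem _).mpr (Or.inr ⟨d, h2, rfl⟩),
        hinter2 c d (Finset.mem_of_mem_erase h1) (Finset.mem_of_mem_erase h2) h3⟩
    obtain ⟨v, w, hvT₁, hwT₁, hvw⟩ := hT₁2elt
    obtain ⟨v', hv'T₂, hφv'⟩ := hφsurj v hvT₁
    obtain ⟨A₀, B₀, hA₀S, hA₀T₁, hvA₀, hB₀T, hB₀T₂, hv'B₀, hcard₀⟩ :=
      hbridge v v' w hvT₁ hv'T₂ hφv' hwT₁ hvw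
    have hA₀X : A₀ ∈ S.erase T₁ := Finset.mem_erase.mpr ⟨hA₀T₁, hA₀S⟩
    have hB₀er : B₀ ∈ T.erase T₂ := Finset.mem_erase.mpr ⟨hB₀T₂, hB₀T⟩
    have hstep : RG A₀ (B₀.image φ) :=
      ⟨(hXmem _).mpr (Or.inl hA₀X), (hXmem _).mpr (Or.inr ⟨B₀, hB₀er, rfl⟩), hcard₀⟩
    rcases (hXmem C₁).mp hC₁ with h1 | ⟨B₁, hB₁, hrfl1⟩ <;>
      rcases (hXmem C₂).mp hC₂ with h2 | ⟨B₂, hB₂, hrfl2⟩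
    · exact hSS C₁ h1 C₂ h2
    · exact ((hSS C₁ h1 A₀ hA₀X).tail hstep).trans (hrfl2 ▸ hTT B₀ hB₀er B₂ hB₂)
    · exact (Std.Symm.symm (self := @Relation.ReflTransGen.stdSymm _ _ ⟨fun _ _ h => hsymRG h⟩) _ _)
        (((hSS C₂ h2 A₀ hA₀X).tail hstep).trans (hrfl1 ▸ hTT B₀ hB₀er B₁ hB₁))
    · exact hrfl1 ▸ hrfl2 ▸ hTT B₁ hB₁ B₂ hB₂
  -- orientation
  have hinjOn : Set.InjOn φ (VT : Set ℕ) :=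
    fun x hx y hy h => hinj x (by exact_mod_cast hx) y (by exact_mod_cast hy) h
  have himgT₂' : T₂.image φ = T₁ := by
    apply Finset.coe_injective
    rw [Finset.coe_image]
    exact hφ.image_eq
  have hmapt_set : ∀ t : ℕ × ℕ × ℕ,
      ({(mapt φ t).1, (mapt φ t).2.1, (mapt φ t).2.2} : Finset ℕ)
        = ({t.1, t.2.1, t.2.2} : Finset ℕ).image φ := by
    intro t
    simp [mapt, Finset.image_insert, Finset.image_singleton]
  have hXorient : ∃ ω : Finset ℕ → ℕ × ℕ × ℕ,
      (∀ C ∈ X, ({(ω C).1, (ω C).2.1, (ω C).2.2} : Finset ℕ) = C) ∧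
      (∀ C₁ ∈ X, ∀ C₂ ∈ X, C₁ ≠ C₂ → ∀ a b : ℕ, a ≠ b →
          a ∈ C₁ ∩ C₂ → b ∈ C₁ ∩ C₂ →
          (a, b) ∈ dedges (ω C₁) → (b, a) ∈ dedges (ω C₂)) := by
    have hPset : ({(mapt φ (ωT0 T₂)).1, (mapt φ (ωT0 T₂)).2.1,
        (mapt φ (ωT0 T₂)).2.2} : Finset ℕ) = T₁ := by
      rw [hmapt_set, hωT01 T₂ hT₂, himgT₂']
    have horcase := dedges_eq_or_rev (t := mapt φ (ωT0 T₂)) (u := ωS T₁)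
      (hPset.trans (hωS1 T₁ hT₁).symm) (by rw [hPset]; exact hT₁3)
    obtain ⟨ωT, hωT1, hωT2, hkey⟩ :
        ∃ ωT : Finset ℕ → ℕ × ℕ × ℕ,
          (∀ B ∈ T, ({(ωT B).1, (ωT B).2.1, (ωT B).2.2} : Finset ℕ) = B) ∧
          (∀ A ∈ T, ∀ B ∈ T, A ≠ B → ∀ a b : ℕ, a ≠ b → a ∈ A ∩ B → b ∈ A ∩ B →
            (a, b) ∈ dedges (ωT A) → (b, a) ∈ dedges (ωT B)) ∧
          (∀ a b : ℕ, (a, b) ∈ dedges (mapt φ (ωT T₂)) ↔ (b, a) ∈ dedges (ωS T₁)) := by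
      rcases horcase with hsame | hrev
      · refine ⟨fun B => revt (ωT0 B), ?_, ?_, ?_⟩
        · intro B hB
          rw [vset_revt]
          exact hωT01 B hB
        · intro A hA B hB hAB a b hab ha hb h
          rw [mem_dedges_revt] at h ⊢
          exact hωT02 A hA B hB hAB b a (Ne.symm hab) hb ha h
        · intro a b
          have hmr : mapt φ (revt (ωT0 T₂)) = revt (mapt φ (ωT0 T₂)) := rfl
          rw [hmr, mem_dedges_revt]
          exact hsame b a
      · exact ⟨ωT0, hωT01, hωT02, fun a b => hrev a b⟩
    have hωTent : ∀ B ∈ T, (ωT B).1 ∈ B ∧ (ωT B).2.1 ∈ B ∧ (ωT B).2.2 ∈ B := by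
      intro B hB
      have h := hωT1 B hB
      refine ⟨?_, ?_, ?_⟩
      · have hm : (ωT B).1 ∈ ({(ωT B).1, (ωT B).2.1, (ωT B).2.2} : Finset ℕ) := by simp
        rwa [h] at hm
      · have hm : (ωT B).2.1 ∈ ({(ωT B).1, (ωT B).2.1, (ωT B).2.2} : Finset ℕ) := by simp
        rwa [h] at hm
      · have hm : (ωT B).2.2 ∈ ({(ωT B).1, (ωT B).2.1, (ωT B).2.2} : Finset ℕ) := by simp
        rwa [h] at hm
    set ωX : Finset ℕ → ℕ × ℕ × ℕ := fun C =>
      if hC : ∃ B, B ∈ T.erase T₂ ∧ B.image φ = C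
        then mapt φ (ωT hC.choose) else ωS C with hωXd
    have hωXS : ∀ C ∈ S.erase T₁, ωX C = ωS C := by
      intro C hC
      have hno : ¬ ∃ B, B ∈ T.erase T₂ ∧ B.image φ = C := by
        rintro ⟨B, hB, h⟩
        exact himg_notS B hB C (hSVS C (Finset.mem_of_mem_erase hC)) h
      simp only [hωXd]
      rw [dif_neg hno]
    have hωXT : ∀ B ∈ T.erase T₂, ωX (B.image φ) = mapt φ (ωT B) := by
      intro B hB
      have hyes : ∃ B', B' ∈ T.erase T₂ ∧ B'.image φ = B.image φ := ⟨B, hB, rfl⟩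
      have hch : hyes.choose = B :=
        hIinj _ (hBVT _ (Finset.mem_of_mem_erase hyes.choose_spec.1)) B
          (hBVT B (Finset.mem_of_mem_erase hB)) hyes.choose_spec.2
      simp only [hωXd]
      rw [dif_pos hyes, hch]
    have hpre2 : ∀ B, B ∈ T → ∀ a, a ∈ B.image φ → a ∈ T₁ →
        ∃ a', a' ∈ T₂ ∧ a' ∈ B ∧ φ a' = a := by
      intro B hB a haimg haT₁
      obtain ⟨a₂, ha₂B, hφa₂⟩ := Finset.mem_image.mp haimg
      have ha₂T₂ : a₂ ∈ T₂ := by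
        by_contra h
        rw [hφid a₂ h] at hφa₂
        exact hdisj' a (hT₁V haT₁) (hφa₂ ▸ hBVT B hB ha₂B)
      exact ⟨a₂, ha₂T₂, ha₂B, hφa₂⟩
    refine ⟨ωX, ?_, ?_⟩
    · intro C hC
      rcases (hXmem C).mp hC with h | ⟨B, hB, rfl⟩
      · rw [hωXS C h]
        exact hωS1 C (Finset.mem_of_mem_erase h)
      · rw [hωXT B hB, hmapt_set, hωT1 B (Finset.mem_of_mem_erase hB)]
    · intro C₁ hC₁ C₂ hC₂ hne a b hab ha hb hd
      obtain ⟨haC₁, haC₂⟩ := Finset.mem_inter.mp ha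
      obtain ⟨hbC₁, hbC₂⟩ := Finset.mem_inter.mp hb
      rcases (hXmem C₁).mp hC₁ with h1 | ⟨B₁, hB₁, hrfl1⟩ <;>
        rcases (hXmem C₂).mp hC₂ with h2 | ⟨B₂, hB₂, hrfl2⟩
      · rw [hωXS C₁ h1] at hd
        rw [hωXS C₂ h2]
        exact hωS2 C₁ (Finset.mem_of_mem_erase h1) C₂ (Finset.mem_of_mem_erase h2)
          hne a b hab ha hb hd
      · -- C₁ in S-part, C₂ an image
        subst hrfl2
        rw [hωXS C₁ h1] at hd
        rw [hωXT B₂ hB₂]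
        have hC₁S : C₁ ∈ S := Finset.mem_of_mem_erase h1
        have hB₂T : B₂ ∈ T := Finset.mem_of_mem_erase hB₂
        have haT₁ : a ∈ T₁ := himg_interVS B₂ hB₂T a haC₂ (hSVS C₁ hC₁S haC₁)
        have hbT₁ : b ∈ T₁ := himg_interVS B₂ hB₂T b hbC₂ (hSVS C₁ hC₁S hbC₁)
        have hST₁ : (b, a) ∈ dedges (ωS T₁) :=
          hωS2 C₁ hC₁S T₁ hT₁ (Finset.mem_erase.mp h1).1 a b hab
            (Finset.mem_inter.mpr ⟨haC₁, haT₁⟩)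
            (Finset.mem_inter.mpr ⟨hbC₁, hbT₁⟩) hd
        have hmap : (a, b) ∈ dedges (mapt φ (ωT T₂)) := (hkey a b).mpr hST₁
        obtain ⟨a', ha'T₂, ha'B₂, hφa'⟩ := hpre2 B₂ hB₂T a haC₂ haT₁
        obtain ⟨b', hb'T₂, hb'B₂, hφb'⟩ := hpre2 B₂ hB₂T b hbC₂ hbT₁
        have hab' : a' ≠ b' := fun h => hab (by rw [← hφa', ← hφb', h])
        obtain ⟨he1, he2, he3⟩ := hωTent T₂ hT₂
        have hpull : (a', b') ∈ dedges (ωT T₂) := by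
          rw [← mem_dedges_mapt_iff (V := VT) hinjOn
            (by exact_mod_cast hT₂V he1) (by exact_mod_cast hT₂V he2)
            (by exact_mod_cast hT₂V he3)
            (by exact_mod_cast hT₂V ha'T₂) (by exact_mod_cast hT₂V hb'T₂)]
          rw [hφa', hφb']
          exact hmap
        have hT' : (b', a') ∈ dedges (ωT B₂) :=
          hωT2 T₂ hT₂ B₂ hB₂T (Ne.symm (Finset.mem_erase.mp hB₂).1) a' b' hab'
            (Finset.mem_inter.mpr ⟨ha'T₂, ha'B₂⟩)
            (Finset.mem_inter.mpr ⟨hb'T₂, hb'B₂⟩) hpull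
        have := mem_dedges_mapt (φ := φ) hT'
        rwa [hφa', hφb'] at this
      · -- C₁ an image, C₂ in S-part
        subst hrfl1
        rw [hωXT B₁ hB₁] at hd
        rw [hωXS C₂ h2]
        have hC₂S : C₂ ∈ S := Finset.mem_of_mem_erase h2
        have hB₁T : B₁ ∈ T := Finset.mem_of_mem_erase hB₁
        have haT₁ : a ∈ T₁ := himg_interVS B₁ hB₁T a haC₁ (hSVS C₂ hC₂S haC₂)
        have hbT₁ : b ∈ T₁ := himg_interVS B₁ hB₁T b hbC₁ (hSVS C₂ hC₂S hbC₂)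
        obtain ⟨a', ha'T₂, ha'B₁, hφa'⟩ := hpre2 B₁ hB₁T a haC₁ haT₁
        obtain ⟨b', hb'T₂, hb'B₁, hφb'⟩ := hpre2 B₁ hB₁T b hbC₁ hbT₁
        have hab' : a' ≠ b' := fun h => hab (by rw [← hφa', ← hφb', h])
        obtain ⟨he1, he2, he3⟩ := hωTent B₁ hB₁T
        have hpull : (a', b') ∈ dedges (ωT B₁) := by
          rw [← mem_dedges_mapt_iff (V := VT) hinjOn
            (by exact_mod_cast hBVT B₁ hB₁T he1) (by exact_mod_cast hBVT B₁ hB₁T he2)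
            (by exact_mod_cast hBVT B₁ hB₁T he3)
            (by exact_mod_cast hT₂V ha'T₂) (by exact_mod_cast hT₂V hb'T₂)]
          rw [hφa', hφb']
          exact hd
        have hT' : (b', a') ∈ dedges (ωT T₂) :=
          hωT2 B₁ hB₁T T₂ hT₂ (Finset.mem_erase.mp hB₁).1 a' b' hab'
            (Finset.mem_inter.mpr ⟨ha'B₁, ha'T₂⟩)
            (Finset.mem_inter.mpr ⟨hb'B₁, hb'T₂⟩) hpull
        have hmap : (b, a) ∈ dedges (mapt φ (ωT T₂)) := by
          have := mem_dedges_mapt (φ := φ) hT'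
          rwa [hφa', hφb'] at this
        have hS₁ : (a, b) ∈ dedges (ωS T₁) := (hkey b a).mp hmap
        exact hωS2 T₁ hT₁ C₂ hC₂S (fun h => (Finset.mem_erase.mp h2).1 h.symm) a b hab
          (Finset.mem_inter.mpr ⟨haT₁, haC₂⟩) (Finset.mem_inter.mpr ⟨hbT₁, hbC₂⟩) hS₁
      · -- both images
        subst hrfl1
        subst hrfl2
        rw [hωXT B₁ hB₁] at hd
        rw [hωXT B₂ hB₂]
        have hB₁T : B₁ ∈ T := Finset.mem_of_mem_erase hB₁
        have hB₂T : B₂ ∈ T := Finset.mem_of_mem_erase hB₂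
        have hBne : B₁ ≠ B₂ := fun h => hne (by rw [h])
        have hainter : a ∈ (B₁ ∩ B₂).image φ := by
          rw [← himg_inter B₁ B₂ (hBVT B₁ hB₁T) (hBVT B₂ hB₂T)]
          exact ha
        have hbinter : b ∈ (B₁ ∩ B₂).image φ := by
          rw [← himg_inter B₁ B₂ (hBVT B₁ hB₁T) (hBVT B₂ hB₂T)]
          exact hb
        obtain ⟨a', ha'I, hφa'⟩ := Finset.mem_image.mp hainter
        obtain ⟨b', hb'I, hφb'⟩ := Finset.mem_image.mp hbinter
        have ha'VT : a' ∈ VT := hBVT B₁ hB₁T (Finset.mem_inter.mp ha'I).1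
        have hb'VT : b' ∈ VT := hBVT B₁ hB₁T (Finset.mem_inter.mp hb'I).1
        have hab' : a' ≠ b' := fun h => hab (by rw [← hφa', ← hφb', h])
        obtain ⟨he1, he2, he3⟩ := hωTent B₁ hB₁T
        have hpull : (a', b') ∈ dedges (ωT B₁) := by
          rw [← mem_dedges_mapt_iff (V := VT) hinjOn
            (by exact_mod_cast hBVT B₁ hB₁T he1) (by exact_mod_cast hBVT B₁ hB₁T he2)
            (by exact_mod_cast hBVT B₁ hB₁T he3)
            (by exact_mod_cast ha'VT) (by exact_mod_cast hb'VT)]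
          rw [hφa', hφb']
          exact hd
        have hT' : (b', a') ∈ dedges (ωT B₂) :=
          hωT2 B₁ hB₁T B₂ hB₂T hBne a' b' hab' ha'I hb'I hpull
        have := mem_dedges_mapt (φ := φ) hT'
        rwa [hφa', hφb'] at this
  -- cardinalities
  have hVX : (VS ∪ (VT \ T₂)).card + 3 = VS.card + VT.card := by
    have hdisj2 : Disjoint VS (VT \ T₂) := hVdisj.mono_right (Finset.sdiff_subset)
    rw [Finset.card_union_of_disjoint hdisj2, Finset.card_sdiff_of_subset hT₂V, hT₂3]
    have := Finset.card_le_card hT₂V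
    rw [hT₂3] at this
    omega
  have hXcard : X.card + 2 = S.card + T.card := by
    rw [hX, Finset.card_union_of_disjoint hpdisj,
      Finset.card_image_of_injOn (hIinjE _ (fun B hB =>
        hBVT B (Finset.mem_of_mem_erase hB))),
      Finset.card_erase_of_mem hT₁, Finset.card_erase_of_mem hT₂]
    have h1 : 1 ≤ S.card := Finset.card_pos.mpr ⟨T₁, hT₁⟩
    have h2 : 1 ≤ T.card := Finset.card_pos.mpr ⟨T₂, hT₂⟩
    omega
  have hEX : (edgesOf X).card + 3 = (edgesOf S).card + (edgesOf T).card := by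
    have hunioE : edgesOf X = edgesOf (S.erase T₁)
        ∪ edgesOf ((T.erase T₂).image (Finset.image φ)) := by
      rw [hX]
      ext e
      simp only [edgesOf, Finset.mem_biUnion, Finset.mem_union, id]
      constructor
      · rintro ⟨A, hA | hA, h⟩
        · exact Or.inl ⟨A, hA, h⟩
        · exact Or.inr ⟨A, hA, h⟩
      · rintro (⟨A, hA, h⟩ | ⟨A, hA, h⟩)
        · exact ⟨A, Or.inl hA, h⟩
        · exact ⟨A, Or.inr hA, h⟩
    have herased : ∀ (K : Finset (Finset ℕ)) (A₀ : Finset ℕ), A₀ ∈ K →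
        (∀ e : Finset ℕ, e.card = 2 → (∃ A ∈ K, e ⊆ A) →
          (K.filter fun A => e ⊆ A).card = 2) →
        edgesOf (K.erase A₀) = edgesOf K := by
      intro K A₀ hA₀ hedge
      apply Finset.Subset.antisymm
      · intro e he
        obtain ⟨A, hA, h⟩ := Finset.mem_biUnion.mp he
        exact Finset.mem_biUnion.mpr ⟨A, Finset.mem_of_mem_erase hA, h⟩
      · intro e he
        obtain ⟨A, hA, h⟩ := Finset.mem_biUnion.mp he
        obtain ⟨hesub, hecard⟩ := Finset.mem_powersetCard.mp h
        by_cases hAT : A = A₀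
        · subst hAT
          obtain ⟨B, hBK, hBA, hBe, _⟩ := other_triangle hedge hA hecard hesub
          exact Finset.mem_biUnion.mpr ⟨B, Finset.mem_erase.mpr ⟨hBA, hBK⟩,
            Finset.mem_powersetCard.mpr ⟨hBe, hecard⟩⟩
        · exact Finset.mem_biUnion.mpr ⟨A, Finset.mem_erase.mpr ⟨hAT, hA⟩, h⟩
    have hES : edgesOf (S.erase T₁) = edgesOf S := herased S T₁ hT₁ hSedge
    have hET : edgesOf (T.erase T₂) = edgesOf T := herased T T₂ hT₂ hTedge
    have hEimg : edgesOf ((T.erase T₂).image (Finset.image φ))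
        = (edgesOf (T.erase T₂)).image (Finset.image φ) := by
      ext e
      constructor
      · intro he
        obtain ⟨C, hC, h⟩ := Finset.mem_biUnion.mp he
        obtain ⟨B, hB, rfl⟩ := Finset.mem_image.mp hC
        obtain ⟨hesub, hecard⟩ := Finset.mem_powersetCard.mp h
        have hBT : B ∈ T := Finset.mem_of_mem_erase hB
        set e' := B.filter (fun x => φ x ∈ e) with he'd
        have he'B : e' ⊆ B := Finset.filter_subset _ _
        have he'VT : e' ⊆ VT := fun x hx => hBVT B hBT (he'B hx)
        have he'img : e'.image φ = e := he_img e B (hBVT B hBT) hesub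
        have he'card : e'.card = 2 := by
          have hci := Finset.card_image_of_injOn (f := φ) (s := e')
            (fun x hx y hy hxy => hinj x (he'VT (by exact_mod_cast hx)) y
              (he'VT (by exact_mod_cast hy)) hxy)
          rw [he'img] at hci
          omega
        exact Finset.mem_image.mpr ⟨e', Finset.mem_biUnion.mpr ⟨B, hB,
          Finset.mem_powersetCard.mpr ⟨he'B, he'card⟩⟩, he'img⟩
      · intro he
        obtain ⟨e', he', rfl⟩ := Finset.mem_image.mp he
        obtain ⟨B, hB, h⟩ := Finset.mem_biUnion.mp he'
        obtain ⟨hesub, hecard⟩ := Finset.mem_powersetCard.mp h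
        have hBT : B ∈ T := Finset.mem_of_mem_erase hB
        refine Finset.mem_biUnion.mpr ⟨B.image φ, Finset.mem_image_of_mem _ hB,
          Finset.mem_powersetCard.mpr ⟨Finset.image_subset_image hesub, ?_⟩⟩
        rw [Finset.card_image_of_injOn (fun x hx y hy hxy =>
          hinj x (hBVT B hBT (hesub (by exact_mod_cast hx))) y
            (hBVT B hBT (hesub (by exact_mod_cast hy))) hxy)]
        exact hecard
    have himgT₂ : T₂.image φ = T₁ := by
      have h1 := hφ.image_eq
      apply Finset.coe_injective
      rw [Finset.coe_image]
      exact h1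
    have hEsubVT : ∀ e ∈ edgesOf T, e ⊆ VT := by
      intro e he
      obtain ⟨B, hB, h⟩ := Finset.mem_biUnion.mp he
      exact fun x hx => hBVT B hB ((Finset.mem_powersetCard.mp h).1 hx)
    have hinterE : edgesOf S ∩ (edgesOf T).image (Finset.image φ)
        = T₁.powersetCard 2 := by
      ext e
      constructor
      · intro he
        obtain ⟨heS, heimg⟩ := Finset.mem_inter.mp he
        obtain ⟨A, hA, hh⟩ := Finset.mem_biUnion.mp heS
        obtain ⟨heA, hecard⟩ := Finset.mem_powersetCard.mp hh
        have heVS : e ⊆ VS := fun x hx => hSVS A hA (heA hx)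
        obtain ⟨e', he'E, he'img⟩ := Finset.mem_image.mp heimg
        have he'VT : e' ⊆ VT := hEsubVT e' he'E
        have he'T₂ : e' ⊆ T₂ := by
          intro x hx
          by_contra hxT₂
          have hxe : x ∈ e := by
            rw [← he'img, Finset.mem_image]
            exact ⟨x, hx, hφid x hxT₂⟩
          exact hdisj' x (heVS hxe) (he'VT hx)
        refine Finset.mem_powersetCard.mpr ⟨?_, hecard⟩
        rw [← he'img, ← himgT₂]
        exact Finset.image_subset_image he'T₂
      · intro he
        obtain ⟨heT₁, hecard⟩ := Finset.mem_powersetCard.mp he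
        refine Finset.mem_inter.mpr ⟨Finset.mem_biUnion.mpr ⟨T₁, hT₁,
          Finset.mem_powersetCard.mpr ⟨heT₁, hecard⟩⟩, ?_⟩
        refine Finset.mem_image.mpr ⟨T₂.filter (fun x => φ x ∈ e),
          Finset.mem_biUnion.mpr ⟨T₂, hT₂, Finset.mem_powersetCard.mpr
            ⟨Finset.filter_subset _ _, by rw [hprecard e heT₁, hecard]⟩⟩,
          hpreimg e heT₁⟩
    have hcardimg : ((edgesOf T).image (Finset.image φ)).card = (edgesOf T).card :=
      Finset.card_image_of_injOn (hIinjE _ hEsubVT)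
    have hcmb := Finset.card_union_add_card_inter (edgesOf S)
      ((edgesOf T).image (Finset.image φ))
    rw [hinterE] at hcmb
    have hpc : (T₁.powersetCard 2).card = 3 := by
      rw [Finset.card_powersetCard, hT₁3]
      rfl
    rw [hunioE, hES, hEimg, hET]
    omega
  refine ⟨⟨hXne, hXtri, hXcov, hXedge, hXlink, hXconn, hXorient, ?_⟩, ?_, ?_⟩
  · -- Euler characteristic
    push_cast
    omega
  · -- vertex count
    have h3 : 3 ≤ VT.card := by
      have := Finset.card_le_card hT₂V
      omega
    omega
  · -- embedding
    intro hnot hXemb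
    apply hnot
    obtain ⟨f, hgen, hface⟩ := hXemb
    have hsub : S.erase T₁ ⊆ X := by rw [hX]; exact Finset.subset_union_left
    have hverts : vertsOf (S.erase T₁) ⊆ vertsOf X := by
      intro v hv
      obtain ⟨A, hA, hvA⟩ := Finset.mem_biUnion.mp hv
      exact Finset.mem_biUnion.mpr ⟨A, hsub hA, hvA⟩
    refine ⟨f, ?_, ?_⟩
    · intro a ha b hb c hc d hd
      exact hgen a (hverts ha) b (hverts hb) c (hverts hc) d (hverts hd)
    · intro σ τ hσ hτ hst
      obtain ⟨hσne, A, hA, hσA⟩ := hσ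
      obtain ⟨hτne, B, hB, hτB⟩ := hτ
      exact hface σ τ ⟨hσne, A, hsub hA, hσA⟩ ⟨hτne, B, hsub hB, hτB⟩ hst
end
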